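/- arXiv:1504.03661 — 8 statements merged into one kernel-verified Lean document; each statement's English description precedes it below -/
import Mathlib

section
/- Let A be an ordered commutative monoid equipped with a second commutative monoid operation ∨ compatible with the order such that + distributes over ∨, i.e., x + (y ∨ z) = (x + y) ∨ (x + z). If nx ≥ ny for some positive integer n (where nx is the n-fold sum x + ... + x), then there exists z ∈ A with x + z ≥ y + z. -/
/-- Finite "join" of `f 0, ..., f k` using the binary operation `j`. -/
def bigj {A : Type*} (j : A → A → A) (f : ℕ → A) : ℕ → A
  | 0 => f 0
  | (k+1) => j (f (k+1)) (bigj j f k)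

theorem bigj_congr {A : Type*} (j : A → A → A) (f g : ℕ → A) (k : ℕ)
    (h : ∀ i ≤ k, f i = g i) : bigj j f k = bigj j g k := by
  induction k with
  | zero => exact h 0 le_rfl
  | succ k ih =>
      simp only [bigj]
      rw [h (k+1) le_rfl, ih (fun i hi => h i (hi.trans (Nat.le_succ k)))]

theorem add_bigj {A : Type*} [AddCommMonoid A] (j : A → A → A)
    (hdist : ∀ a b c, a + j b c = j (a + b) (a + c))
    (a : A) (f : ℕ → A) (k : ℕ) :
    a + bigj j f k = bigj j (fun i => a + f i) k := by
  induction k with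
  | zero => rfl
  | succ k ih => simp only [bigj, hdist, ih]

theorem bigj_shift {A : Type*} (j : A → A → A)
    (hcomm : ∀ a b, j a b = j b a)
    (hassoc : ∀ a b c, j (j a b) c = j a (j b c))
    (f : ℕ → A) (k : ℕ) :
    bigj j f (k+1) = j (bigj j (fun i => f (i+1)) k) (f 0) := by
  induction k with
  | zero => simp only [bigj]
  | succ k ih =>
      show j (f (k+2)) (bigj j f (k+1)) = _
      rw [ih, ← hassoc]
      rfl

theorem bigj_mono {A : Type*} [Preorder A] (j : A → A → A)
    (hcomm : ∀ a b, j a b = j b a)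
    (hassoc : ∀ a b c, j (j a b) c = j a (j b c))
    (hmono : ∀ a b c, a ≤ b → j a c ≤ j b c)
    (f : ℕ → A) (k : ℕ) (h : f 0 ≤ f (k+1)) :
    bigj j f k ≤ bigj j (fun i => f (i+1)) k := by
  cases k with
  | zero => exact h
  | succ k =>
      rw [bigj_shift j hcomm hassoc]
      show _ ≤ j (f (k+2)) (bigj j (fun i => f (i+1)) k)
      rw [hcomm _ (f 0)]
      exact hmono _ _ _ h

/-- If an ordered commutative monoid `A` carries a second commutative monoid operation `∨`
(compatible with the order) over which `+` distributes, then `n • x ≥ n • y` for some `n > 0`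
implies the existence of a catalyst `z` with `x + z ≥ y + z`. -/
theorem stmt4 {A : Type*} [AddCommMonoid A] [PartialOrder A] [IsOrderedAddMonoid A]
    (j : A → A → A) (u : A)
    (hcomm : ∀ a b, j a b = j b a)
    (hassoc : ∀ a b c, j (j a b) c = j a (j b c))
    (hunit : ∀ a, j u a = a)
    (hmono : ∀ a b c, a ≤ b → j a c ≤ j b c)
    (hdist : ∀ a b c, a + j b c = j (a + b) (a + c))
    {x y : A} {n : ℕ} (hn : 0 < n) (h : n • y ≤ n • x) :
    ∃ z : A, y + z ≤ x + z := by
  obtain ⟨m, rfl⟩ : ∃ m, n = m + 1 := ⟨n - 1, by omega⟩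
  set F : ℕ → A := fun i => i • x + ((m + 1) - i) • y with hF
  refine ⟨bigj j (fun i => i • x + (m - i) • y) m, ?_⟩
  have hy : y + bigj j (fun i => i • x + (m - i) • y) m = bigj j F m := by
    rw [add_bigj j hdist]
    refine bigj_congr j _ _ m (fun i hi => ?_)
    simp only [hF]
    have h2 : (m - i) + 1 = (m + 1) - i := by omega
    rw [add_comm y, add_assoc, ← succ_nsmul, h2]
  have hx : x + bigj j (fun i => i • x + (m - i) • y) m
      = bigj j (fun i => F (i+1)) m := by
    rw [add_bigj j hdist]
    refine bigj_congr j _ _ m (fun i hi => ?_)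
    simp only [hF]
    have h2 : m - i = (m + 1) - (i + 1) := by omega
    rw [← add_assoc, ← succ_nsmul', h2]
  rw [hy, hx]
  refine bigj_mono j hcomm hassoc hmono F m ?_
  simp only [hF, zero_smul, zero_add, Nat.sub_self, add_zero, Nat.sub_zero]
  exact h
end

section
/- Let A be an ordered commutative monoid with a second monoid operation ∨ compatible with the order such that + distributes over ∨. If A is cancellative, then A is torsion-free: nx ≥ ny for some positive integer n implies x ≥ y. -/
private def cseq {A : Type*} [AddCommMonoid A] (j : A → A → A) (x y : A) : ℕ → A
  | 0 => 0
  | (k+1) => j (y + cseq j x y k) ((k+1) • x)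

private theorem cseq_alt {A : Type*} [AddCommMonoid A] (j : A → A → A) (x y : A)
    (hcomm : ∀ a b, j a b = j b a)
    (hassoc : ∀ a b c, j (j a b) c = j a (j b c))
    (hdist : ∀ a b c, a + j b c = j (a + b) (a + c)) :
    ∀ k, cseq j x y (k+1) = j ((k+1) • y) (x + cseq j x y k) := by
  intro k
  induction k with
  | zero => simp [cseq]
  | succ k ih =>
      have step1 : y + cseq j x y (k+1) = j ((k+2) • y) (x + (y + cseq j x y k)) := by
        rw [ih, hdist]
        congr 1 <;> first | exact (succ_nsmul' _ _).symm | abel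
      calc cseq j x y (k+2) = j (y + cseq j x y (k+1)) ((k+2) • x) := rfl
        _ = j (j ((k+2) • y) (x + (y + cseq j x y k))) ((k+2) • x) := by rw [step1]
        _ = j ((k+2) • y) (j (x + (y + cseq j x y k)) ((k+2) • x)) := hassoc _ _ _
        _ = j ((k+2) • y) (j (x + (y + cseq j x y k)) (x + (k+1) • x)) := by
              congr 2; rw [succ_nsmul' x (k+1)]
        _ = j ((k+2) • y) (x + j (y + cseq j x y k) ((k+1) • x)) := by rw [hdist]
        _ = j ((k+2) • y) (x + cseq j x y (k+1)) := rfl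

/-- If an ordered commutative monoid `A` carries a second commutative monoid operation `∨`
(compatible with the order) over which `+` distributes, and `A` is cancellative, then `A`
is torsion-free: `n • x ≥ n • y` for some `n > 0` implies `x ≥ y`. -/
theorem stmt5 {A : Type*} [AddCommMonoid A] [PartialOrder A] [IsOrderedAddMonoid A]
    (j : A → A → A) (u : A)
    (hcomm : ∀ a b, j a b = j b a)
    (hassoc : ∀ a b c, j (j a b) c = j a (j b c))
    (hunit : ∀ a, j u a = a)
    (hmono : ∀ a b c, a ≤ b → j a c ≤ j b c)
    (hdist : ∀ a b c, a + j b c = j (a + b) (a + c))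
    (hcanc : ∀ x y z : A, x + z ≤ y + z → x ≤ y)
    {x y : A} {n : ℕ} (hn : 0 < n) (h : n • y ≤ n • x) :
    y ≤ x := by
  match n, hn with
  | 1, _ => simpa using h
  | (m+2), _ =>
    set c := cseq j x y m with hc
    have hy : y + cseq j x y (m+1) = j ((m+2) • y) (x + y + c) := by
      rw [cseq_alt j x y hcomm hassoc hdist m, hdist]
      congr 1 <;> first | exact (succ_nsmul' _ _).symm | abel
    have hx : x + cseq j x y (m+1) = j ((m+2) • x) (x + y + c) := by
      calc x + cseq j x y (m+1) = x + j (y + c) ((m+1) • x) := rfl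
        _ = j (x + (y + c)) (x + (m+1) • x) := hdist _ _ _
        _ = j ((m+2) • x) (x + y + c) := by
              rw [hcomm]; congr 1 <;> first | exact (succ_nsmul' _ _).symm | abel
    apply hcanc _ _ (cseq j x y (m+1))
    rw [hy, hx]
    exact hmono _ _ _ h
end

section
/- Let A be an ordered commutative monoid with a second monoid operation ∨ compatible with the order such that + distributes over ∨. Then the ordered abelian group oag(A) (obtained by first passing to the catalytic order x ⪰ y iff ∃z, x+z ≥ y+z, and then taking the group of formal differences) is torsion-free. -/
/-- Iterated join of `g 0, ..., g k` using the operation `j`. -/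
def catJoin {A : Type*} (j : A → A → A) (g : ℕ → A) : ℕ → A
  | 0 => g 0
  | k+1 => j (g (k+1)) (catJoin j g k)

theorem catJoin_add {A : Type*} [AddCommMonoid A] (j : A → A → A)
    (hdist : ∀ a b c, a + j b c = j (a + b) (a + c))
    (a : A) (g : ℕ → A) : ∀ k, a + catJoin j g k = catJoin j (fun i => a + g i) k
  | 0 => rfl
  | k+1 => by
      rw [catJoin, hdist, catJoin_add j hdist a g k]; rfl

theorem catJoin_congr {A : Type*} (j : A → A → A) (g g' : ℕ → A) :
    ∀ k, (∀ i, i ≤ k → g i = g' i) → catJoin j g k = catJoin j g' k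
  | 0, h => h 0 le_rfl
  | k+1, h => by
      rw [catJoin, catJoin, h (k+1) le_rfl,
        catJoin_congr j g g' k (fun i hi => h i (hi.trans k.le_succ))]

theorem catJoin_shift {A : Type*} (j : A → A → A)
    (hcomm : ∀ a b, j a b = j b a)
    (hassoc : ∀ a b c, j (j a b) c = j a (j b c))
    (g : ℕ → A) :
    ∀ k, catJoin j g (k+1) = j (catJoin j (fun i => g (i+1)) k) (g 0)
  | 0 => by rw [catJoin, catJoin, catJoin, hcomm]
  | k+1 => by
      rw [catJoin, catJoin_shift j hcomm hassoc g k, ← hassoc]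
      rfl

/-- If an ordered commutative monoid `A` carries a second commutative monoid operation `∨`
(compatible with the order) over which `+` distributes, then the ordered abelian group
`oag(A)` of formal differences with the catalytic ordering is torsion-free (unperforated):
if `n • (x - y) ≥ 0` in `oag(A)`, i.e. `n • x + z ≥ n • y + z` for some catalyst `z`,
with `n > 0`, then `x - y ≥ 0` in `oag(A)`, i.e. `x + z' ≥ y + z'` for some `z'`. -/
theorem stmt6 {A : Type*} [AddCommMonoid A] [PartialOrder A] [IsOrderedAddMonoid A]
    (j : A → A → A) (u : A)
    (hcomm : ∀ a b, j a b = j b a)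
    (hassoc : ∀ a b c, j (j a b) c = j a (j b c))
    (hunit : ∀ a, j u a = a)
    (hmono : ∀ a b c, a ≤ b → j a c ≤ j b c)
    (hdist : ∀ a b c, a + j b c = j (a + b) (a + c))
    {x y : A} {n : ℕ} (hn : 0 < n)
    (h : ∃ z : A, n • y + z ≤ n • x + z) :
    ∃ z : A, y + z ≤ x + z := by
  obtain ⟨z, hz⟩ := h
  obtain ⟨m, rfl⟩ : ∃ m, n = m + 1 := ⟨n - 1, (Nat.succ_pred_eq_of_pos hn).symm⟩
  -- the terms of the joins
  set g : ℕ → A := fun k => k • x + (m + 1 - k) • y + z with hg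
  set f : ℕ → A := fun i => i • x + (m - i) • y with hf
  set w : A := catJoin j f m with hw
  have hy : y + (w + z) = catJoin j g m := by
    have : y + (w + z) = (y + z) + w := by
      rw [add_comm w z, ← add_assoc]
    rw [this, catJoin_add j hdist (y + z) f m]
    refine catJoin_congr j _ _ m (fun i hi => ?_)
    simp only [hg, hf]
    rw [Nat.succ_sub hi, succ_nsmul]
    abel
  have hx : x + (w + z) = catJoin j (fun i => g (i + 1)) m := by
    have : x + (w + z) = (x + z) + w := by
      rw [add_comm w z, ← add_assoc]
    rw [this, catJoin_add j hdist (x + z) f m]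
    refine catJoin_congr j _ _ m (fun i hi => ?_)
    simp only [hg, hf]
    rw [Nat.succ_sub_succ, succ_nsmul]
    abel
  refine ⟨w + z, ?_⟩
  rw [hy, hx]
  rcases Nat.eq_zero_or_pos m with rfl | hm
  · -- n = 1
    simpa [catJoin, hg, one_nsmul] using hz
  obtain ⟨k, rfl⟩ : ∃ k, m = k + 1 := ⟨m - 1, (Nat.succ_pred_eq_of_pos hm).symm⟩
  rw [catJoin_shift j hcomm hassoc g k, show catJoin j (fun i => g (i+1)) (k+1)
      = j (g (k+2)) (catJoin j (fun i => g (i+1)) k) from rfl,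
    hcomm _ (g 0)]
  refine hmono _ _ _ ?_
  have h0 : g 0 = (k + 2) • y + z := by simp [hg]
  have hn' : g (k + 2) = (k + 2) • x + z := by simp [hg]
  rw [h0, hn']
  exact hz
end

section
/- Hahn–Banach separation for cones: In an Archimedean ordered ℚ-vector space W, an element x satisfies x ≥ 0 if and only if f(x) ≥ 0 for every functional f : W → ℝ (i.e., every ℚ-linear order-preserving map to ℝ). -/
/-- `U` is absolutely convex and absorbent in an ordered ℚ-vector space. -/
def AbsConvexAbsorbent {V : Type*} [AddCommGroup V] [PartialOrder V] [IsOrderedAddMonoid V] [Module ℚ V] (U : Set V) : Prop :=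
  (∀ x ∈ U, ∀ y ∈ U, ∀ l : ℚ, 0 ≤ l → l ≤ 1 → l • x + (1 - l) • y ∈ U) ∧
  (∀ x : V, 0 ≤ x → x ∈ U) ∧
  (∀ x : V, ∃ m : ℚ, 0 < m ∧ m • x ∈ U)

section RieszQ

open Set LinearMap

variable {E : Type*} [AddCommGroup E] [Module ℚ E]

namespace RieszExtensionQ

open Submodule

variable (s : ConvexCone ℚ E) (f : E →ₗ.[ℚ] ℝ)

theorem step (nonneg : ∀ x : f.domain, (x : E) ∈ s → 0 ≤ f x)
    (dense : ∀ y, ∃ x : f.domain, (x : E) + y ∈ s) (hdom : f.domain ≠ ⊤) :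
    ∃ g, f < g ∧ ∀ x : g.domain, (x : E) ∈ s → 0 ≤ g x := by
  obtain ⟨y, -, hy⟩ : ∃ y ∈ ⊤, y ∉ f.domain := SetLike.exists_of_lt (lt_top_iff_ne_top.2 hdom)
  obtain ⟨c, le_c, c_le⟩ :
      ∃ c, (∀ x : f.domain, -(x : E) - y ∈ s → f x ≤ c) ∧
        ∀ x : f.domain, (x : E) + y ∈ s → c ≤ f x := by
    set Sp := f '' { x : f.domain | (x : E) + y ∈ s }
    set Sn := f '' { x : f.domain | -(x : E) - y ∈ s }
    suffices (upperBounds Sn ∩ lowerBounds Sp).Nonempty by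
      simpa only [Set.Nonempty, upperBounds, lowerBounds, forall_mem_image, Sn, Sp, Set.mem_inter_iff, Set.mem_setOf_eq] using this
    refine exists_between_of_forall_le (Nonempty.image f ?_) (Nonempty.image f (dense y)) ?_
    · rcases dense (-y) with ⟨x, hx⟩
      rw [← neg_neg x, NegMemClass.coe_neg, ← sub_eq_add_neg] at hx
      exact ⟨_, hx⟩
    rintro a ⟨xn, hxn, rfl⟩ b ⟨xp, hxp, rfl⟩
    have := s.add_mem hxp hxn
    rw [add_assoc, add_sub_cancel, ← sub_eq_add_neg, ← AddSubgroupClass.coe_sub] at this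
    replace := nonneg _ this
    rwa [f.map_sub, sub_nonneg] at this
  refine ⟨f.supSpanSingleton y (-c) hy, ?_, ?_⟩
  · refine lt_iff_le_not_ge.2 ⟨f.left_le_sup _ _, fun H => ?_⟩
    replace H := LinearPMap.domain_mono.monotone H
    rw [LinearPMap.domain_supSpanSingleton, sup_le_iff, span_le, singleton_subset_iff] at H
    exact hy H.2
  · rintro ⟨z, hz⟩ hzs
    rcases mem_sup.1 hz with ⟨x, hx, y', hy', rfl⟩
    rcases mem_span_singleton.1 hy' with ⟨r, rfl⟩
    simp only [Subtype.coe_mk] at hzs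
    rw [LinearPMap.supSpanSingleton_apply_mk _ _ _ _ _ hx, smul_neg, ← sub_eq_add_neg, sub_nonneg]
    rcases lt_trichotomy r 0 with (hr | hr | hr)
    · have : -(r⁻¹ • x) - y ∈ s := by
        rwa [← s.smul_mem_iff (neg_pos.2 hr), smul_sub, smul_neg, neg_smul, neg_neg, smul_smul,
          mul_inv_cancel₀ hr.ne, one_smul, sub_eq_add_neg, neg_smul, neg_neg]
      replace : f (r⁻¹ • ⟨x, hx⟩) ≤ c := le_c (r⁻¹ • ⟨x, hx⟩) (by exact this)
      rw [f.map_smul, Rat.smul_def, Rat.cast_inv] at this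
      rw [Rat.smul_def]
      have hrR : (r : ℝ) < 0 := by exact_mod_cast hr
      have h2 := mul_le_mul_of_nonpos_left this hrR.le
      rwa [← mul_assoc, mul_inv_cancel₀ hrR.ne, one_mul] at h2
    · subst r
      simp only [zero_smul, add_zero, RingHom.id_apply] at hzs ⊢
      apply nonneg
      exact hzs
    · have : r⁻¹ • x + y ∈ s := by
        rwa [← s.smul_mem_iff hr, smul_add, smul_smul, mul_inv_cancel₀ hr.ne', one_smul]
      replace : c ≤ f (r⁻¹ • ⟨x, hx⟩) := c_le (r⁻¹ • ⟨x, hx⟩) (by exact this)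
      rw [f.map_smul, Rat.smul_def, Rat.cast_inv] at this
      rw [Rat.smul_def]
      have hrR : (0:ℝ) < (r : ℝ) := by exact_mod_cast hr
      have h2 := mul_le_mul_of_nonneg_left this hrR.le
      rwa [← mul_assoc, mul_inv_cancel₀ hrR.ne', one_mul] at h2
  
theorem exists_top (p : E →ₗ.[ℚ] ℝ) (hp_nonneg : ∀ x : p.domain, (x : E) ∈ s → 0 ≤ p x)
    (hp_dense : ∀ y, ∃ x : p.domain, (x : E) + y ∈ s) :
    ∃ q ≥ p, q.domain = ⊤ ∧ ∀ x : q.domain, (x : E) ∈ s → 0 ≤ q x := by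
  set S := { p : E →ₗ.[ℚ] ℝ | ∀ x : p.domain, (x : E) ∈ s → 0 ≤ p x }
  have hSc : ∀ c, c ⊆ S → IsChain (· ≤ ·) c → ∀ y ∈ c, ∃ ub ∈ S, ∀ z ∈ c, z ≤ ub := by
    intro c hcs c_chain y hy
    clear hp_nonneg hp_dense p
    have cne : c.Nonempty := ⟨y, hy⟩
    have hcd : DirectedOn (· ≤ ·) c := c_chain.directedOn
    refine ⟨LinearPMap.sSup c hcd, ?_, fun _ ↦ LinearPMap.le_sSup hcd⟩
    rintro ⟨x, hx⟩ hxs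
    have hdir : DirectedOn (· ≤ ·) (LinearPMap.domain '' c) :=
      directedOn_image.2 (hcd.mono LinearPMap.domain_mono.monotone)
    rcases (mem_sSup_of_directed (cne.image _) hdir).1 hx with ⟨_, ⟨f, hfc, rfl⟩, hfx⟩
    have : f ≤ LinearPMap.sSup c hcd := LinearPMap.le_sSup _ hfc
    convert ← hcs hfc ⟨x, hfx⟩ hxs using 1
    exact this.2 rfl
  obtain ⟨q, hpq, hqs, hq⟩ := zorn_le_nonempty₀ S hSc p hp_nonneg
  refine ⟨q, hpq, ?_, hqs⟩
  contrapose! hq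
  have hqd : ∀ y, ∃ x : q.domain, (x : E) + y ∈ s := fun y ↦
    let ⟨x, hx⟩ := hp_dense y
    ⟨Submodule.inclusion hpq.left x, hx⟩
  rcases step s q hqs hqd hq with ⟨r, hqr, hr⟩
  exact ⟨r, hr, hqr.le, fun hrq ↦ hqr.ne' <| hrq.antisymm hqr.le⟩

end RieszExtensionQ

theorem riesz_extension_q (s : ConvexCone ℚ E) (f : E →ₗ.[ℚ] ℝ)
    (nonneg : ∀ x : f.domain, (x : E) ∈ s → 0 ≤ f x)
    (dense : ∀ y, ∃ x : f.domain, (x : E) + y ∈ s) :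
    ∃ g : E →ₗ[ℚ] ℝ, (∀ x : f.domain, g x = f x) ∧ ∀ x ∈ s, 0 ≤ g x := by
  rcases RieszExtensionQ.exists_top s f nonneg dense
    with ⟨⟨g_dom, g⟩, ⟨-, hfg⟩, rfl : g_dom = ⊤, hgs⟩
  refine ⟨g.comp (LinearMap.id.codRestrict ⊤ fun _ ↦ trivial), ?_, ?_⟩
  · exact fun x => (hfg rfl).symm
  · exact fun x hx => hgs ⟨x, _⟩ hx

theorem exists_extension_of_le_sublinear_q (f : E →ₗ.[ℚ] ℝ) (N : E → ℝ)
    (N_hom : ∀ c : ℚ, 0 < c → ∀ x, N (c • x) = (c : ℝ) * N x)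
    (N_add : ∀ x y, N (x + y) ≤ N x + N y)
    (hf : ∀ x : f.domain, f x ≤ N x) :
    ∃ g : E →ₗ[ℚ] ℝ, (∀ x : f.domain, g x = f x) ∧ ∀ x, g x ≤ N x := by
  let s : ConvexCone ℚ (E × ℝ) :=
    { carrier := { p : E × ℝ | N p.1 ≤ p.2 }
      smul_mem' := fun c hc p hp =>
        calc
          N (c • p.1) = (c : ℝ) * N p.1 := N_hom c hc p.1
          _ ≤ (c : ℝ) * p.2 := mul_le_mul_of_nonneg_left hp (by exact_mod_cast hc.le)
          _ = c • p.2 := (Rat.smul_def _ _).symm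
      add_mem' := fun x hx y hy => (N_add _ _).trans (add_le_add hx hy) }
  set f' := (-f).coprod (LinearMap.id.toPMap ⊤)
  have hf'_nonneg : ∀ x : f'.domain, x.1 ∈ s → 0 ≤ f' x := fun x (hx : N x.1.1 ≤ x.1.2) ↦ by
    simpa [f'] using le_trans (hf ⟨x.1.1, x.2.1⟩) hx
  have hf'_dense : ∀ y : E × ℝ, ∃ x : f'.domain, ↑x + y ∈ s := by
    rintro ⟨x, y⟩
    refine ⟨⟨(0, N x - y), ⟨f.domain.zero_mem, trivial⟩⟩, ?_⟩
    simp only [s, ConvexCone.mem_mk, Set.mem_setOf_eq, Prod.fst_add, Prod.snd_add, zero_add,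
      sub_add_cancel, le_rfl]
  obtain ⟨g, g_eq, g_nonneg⟩ := riesz_extension_q s f' hf'_nonneg hf'_dense
  replace g_eq : ∀ (x : f.domain) (y : ℝ), g (x, y) = y - f x := fun x y ↦
    (g_eq ⟨(x, y), ⟨x.2, trivial⟩⟩).trans (sub_eq_neg_add _ _).symm
  refine ⟨-g.comp (LinearMap.inl ℚ E ℝ), fun x ↦ ?_, fun x ↦ ?_⟩
  · simp [g_eq x 0]
  · calc -g (x, 0) = g (0, N x) - g (x, N x) := by simp [← map_sub, ← map_neg]
      _ = N x - g (x, N x) := by simpa using g_eq 0 (N x)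
      _ ≤ N x := by simpa using g_nonneg ⟨x, N x⟩ (le_refl (N x))

end RieszQ

open Pointwise in
/-- Hahn–Banach separation for cones: in an Archimedean ordered ℚ-vector space `W`, one has
`x ≥ 0` iff `f x ≥ 0` for every functional `f` (ℚ-linear, order-preserving map `W → ℝ`). -/
theorem stmt13 {W : Type*} [AddCommGroup W] [PartialOrder W] [IsOrderedAddMonoid W] [Module ℚ W]
    (hsmul : ∀ (q : ℚ) (x : W), 0 ≤ q → 0 ≤ x → 0 ≤ q • x)
    (harch : ∀ x : W, 0 ≤ x ↔ ∀ U : Set W, AbsConvexAbsorbent U → x ∈ U)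
    (x : W) :
    0 ≤ x ↔ ∀ f : W →ₗ[ℚ] ℝ, (∀ y : W, 0 ≤ y → 0 ≤ f y) → 0 ≤ f x := by
  constructor
  · intro hx f hf
    exact hf x hx
  · intro hfs
    by_contra hx
    obtain ⟨U, hU, hxU⟩ : ∃ U : Set W, AbsConvexAbsorbent U ∧ x ∉ U := by
      by_contra h
      push_neg at h
      exact hx ((harch x).2 fun U hU => h U hU)
    obtain ⟨hconv, hcone, habs⟩ := hU
    have h0U : (0 : W) ∈ U := hcone 0 le_rfl
    -- the set of "admissible scales" for the gauge of `-U`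
    set A : W → Set ℝ := fun w => {r : ℝ | ∃ q : ℚ, 0 < q ∧ -(q⁻¹ • w) ∈ U ∧ r = (q : ℝ)} with hA
    have hAne : ∀ w, (A w).Nonempty := by
      intro w
      obtain ⟨m, hm, hmU⟩ := habs (-w)
      exact ⟨((m⁻¹ : ℚ) : ℝ), m⁻¹, inv_pos.2 hm, by rwa [inv_inv, ← smul_neg], rfl⟩
    have hAnonneg : ∀ w, ∀ r ∈ A w, (0:ℝ) ≤ r := by
      rintro w r ⟨q, hq, -, rfl⟩
      exact_mod_cast hq.le
    have hAbdd : ∀ w, BddBelow (A w) := fun w => ⟨0, fun r hr => hAnonneg w r hr⟩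
    set N : W → ℝ := fun w => sInf (A w) with hN
    have hNnonneg : ∀ w, 0 ≤ N w := fun w => le_csInf (hAne w) (hAnonneg w)
    have hNle : ∀ w, ∀ r ∈ A w, N w ≤ r := fun w r hr => csInf_le (hAbdd w) hr
    -- homogeneity
    have N_hom : ∀ c : ℚ, 0 < c → ∀ w, N (c • w) = (c : ℝ) * N w := by
      intro c hc w
      have himg : A (c • w) = (c : ℝ) • A w := by
        ext r
        rw [Set.mem_smul_set]
        constructor
        · rintro ⟨q, hq, hqU, rfl⟩
          refine ⟨((c⁻¹ * q : ℚ) : ℝ), ⟨c⁻¹ * q, by positivity, ?_, rfl⟩, ?_⟩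
          · have heq : ((c⁻¹ * q)⁻¹ : ℚ) • w = q⁻¹ • (c • w) := by
              rw [smul_smul, mul_inv, inv_inv, mul_comm]
            rwa [heq]
          · rw [smul_eq_mul]; push_cast; field_simp
        · rintro ⟨r, ⟨q, hq, hqU, rfl⟩, rfl⟩
          refine ⟨c * q, by positivity, ?_, by rw [smul_eq_mul]; push_cast; ring⟩
          have heq : ((c * q)⁻¹ : ℚ) • (c • w) = q⁻¹ • w := by
            rw [smul_smul]
            congr 1
            field_simp
          rwa [heq]
      show sInf (A (c • w)) = (c : ℝ) * sInf (A w)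
      rw [himg, ← smul_eq_mul, Real.sInf_smul_of_nonneg (by positivity : (0:ℝ) ≤ (c:ℝ))]
    -- subadditivity
    have N_add : ∀ a b, N (a + b) ≤ N a + N b := by
      intro a b
      have key : ∀ r ∈ A a, ∀ t ∈ A b, N (a + b) ≤ r + t := by
        rintro r ⟨q, hq, hqU, rfl⟩ t ⟨p, hp, hpU, rfl⟩
        refine hNle _ _ ⟨q + p, add_pos hq hp, ?_, by push_cast; ring⟩
        have hl1 : (0:ℚ) ≤ q / (q + p) := le_of_lt (div_pos hq (add_pos hq hp))
        have hl2 : q / (q + p) ≤ 1 := by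
          rw [div_le_one (add_pos hq hp)]; linarith only [hp]
        have := hconv _ hqU _ hpU (q / (q + p)) hl1 hl2
        have heq : (q / (q + p)) • -(q⁻¹ • a) + (1 - q / (q + p)) • -(p⁻¹ • b)
            = -((q + p)⁻¹ • (a + b)) := by
          have h1 : (1 : ℚ) - q / (q + p) = p / (q + p) := by
            field_simp
            ring
          rw [h1, smul_neg, smul_neg, smul_smul, smul_smul, ← neg_add, smul_add]
          congr 2 <;> (congr 1; field_simp; try ring)
        rwa [heq] at this
      have : ∀ r ∈ A a, N (a + b) - r ≤ N b := by
        intro r hr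
        refine le_csInf (hAne b) fun t ht => ?_
        linarith only [key r hr t ht]
      have : N (a + b) - N b ≤ N a := by
        refine le_csInf (hAne a) fun r hr => ?_
        linarith only [this r hr]
      linarith only [this]
    -- N (-x) ≥ 1
    have hNx : (1:ℝ) ≤ N (-x) := by
      refine le_csInf (hAne _) ?_
      rintro r ⟨q, hq, hqU, rfl⟩
      by_contra hlt
      push_neg at hlt
      have hq1 : q < 1 := by exact_mod_cast hlt
      rw [smul_neg, neg_neg] at hqU
      have := hconv _ hqU _ h0U q hq.le hq1.le
      rw [smul_smul, mul_inv_cancel₀ hq.ne', one_smul, smul_zero, add_zero] at this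
      exact hxU this
    -- N vanishes on negatives of the positive cone
    have hNneg : ∀ y : W, 0 ≤ y → N (-y) = 0 := by
      intro y hy
      refine le_antisymm ?_ (hNnonneg _)
      by_contra hlt
      push_neg at hlt
      obtain ⟨q, hq0, hq⟩ := exists_rat_btwn hlt
      have hq0' : (0:ℚ) < q := by exact_mod_cast hq0
      have : ((q:ℝ)) ∈ A (-y) := by
        refine ⟨q, hq0', ?_, rfl⟩
        rw [smul_neg, neg_neg]
        exact hcone _ (hsmul q⁻¹ y (le_of_lt (inv_pos.2 hq0')) hy)
      exact absurd (hNle _ _ this) (not_le.2 hq)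
    -- set up the partial linear map on span {x}
    have hx0 : x ≠ 0 := fun h => hx (h ▸ le_rfl)
    have hf₀le : ∀ z : (LinearPMap.mkSpanSingleton (K := ℚ) (σ := RingHom.id ℚ) x (-(N (-x))) hx0).domain,
        (LinearPMap.mkSpanSingleton (K := ℚ) (σ := RingHom.id ℚ) x (-(N (-x))) hx0) z ≤ N z := by
      rintro ⟨z, hz⟩
      rcases Submodule.mem_span_singleton.1 hz with ⟨r, rfl⟩
      rw [LinearPMap.mkSpanSingleton'_apply]
      rcases le_or_gt 0 r with hr | hr
      · have h1 : r • -(N (-x)) ≤ 0 := by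
          rw [Rat.smul_def, mul_neg, neg_nonpos]
          have h0r : (0:ℝ) ≤ (r:ℝ) := by exact_mod_cast hr
          exact mul_nonneg h0r (hNnonneg (-x))
        exact h1.trans (hNnonneg _)
      · have heq : r • x = (-r) • (-x) := by rw [neg_smul, smul_neg, neg_neg]
        refine le_of_eq ?_
        show r • -N (-x) = N (r • x)
        rw [heq, N_hom (-r) (by exact neg_pos.2 hr) (-x), Rat.smul_def]
        push_cast
        ring
    obtain ⟨g, hg_eq, hg_le⟩ := exists_extension_of_le_sublinear_q
      (LinearPMap.mkSpanSingleton (K := ℚ) (σ := RingHom.id ℚ) x (-(N (-x))) hx0) N N_hom N_add hf₀le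
    have hg_pos : ∀ y : W, 0 ≤ y → 0 ≤ g y := by
      intro y hy
      have h1 := hg_le (-y)
      rw [map_neg, hNneg y hy] at h1
      linarith only [h1]
    have hgx : g x = -(N (-x)) := by
      have h1 := hg_eq ⟨x, Submodule.mem_span_singleton_self x⟩
      rwa [LinearPMap.mkSpanSingleton_apply] at h1
    have hfin := hfs g hg_pos
    rw [hgx] at hfin
    linarith only [hfin, hNx]
end

section
/- Let A be an ordered commutative monoid with generating pair (g₊, g₋). For x, y ∈ A, the following are equivalent: (1) for all rational ε > 0 there exist n, k ∈ ℕ with k ≤ εn and nx + k·g₊ ≥ ny + k·g₋; (2) f(x) ≥ f(y) for every functional f : A → ℝ. -/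
namespace Stmt15

theorem hb {G : Type*} [AddCommGroup G] (q : G → ℝ)
    (hadd : ∀ a b, q (a + b) ≤ q a + q b)
    (hhom : ∀ n : ℕ, 0 < n → ∀ a, q (n • a) = n * q a) (g₀ : G) :
    ∃ s : G →+ ℝ, (∀ h, s h ≤ q h) ∧ s g₀ = q g₀ := by
  have q0 : q 0 = 0 := by
    have h2 := hhom 2 (by norm_num) 0
    simp at h2
    linarith
  have hnegq : ∀ a, -q (-a) ≤ q a := fun a => by
    have := hadd a (-a); simp [q0] at this; linarith
  set S : Set (AddSubgroup (G × ℝ)) := {Γ | ∀ p ∈ Γ, p.2 ≤ q p.1} with hS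
  have hzkey : ∀ a : G, ∀ z : ℤ, (z : ℝ) * q a ≤ q (z • a) := by
    intro a z
    obtain ⟨n, rfl | rfl⟩ := z.eq_nat_or_neg
    · rcases Nat.eq_zero_or_pos n with rfl | hn
      · simp [q0]
      · rw [natCast_zsmul, hhom n hn]; push_cast; exact le_refl _
    · rcases Nat.eq_zero_or_pos n with rfl | hn
      · simp [q0]
      · have h1 : (-(n:ℤ)) • a = n • (-a) := by
          rw [neg_zsmul, natCast_zsmul]; exact (smul_neg n a).symm ▸ (neg_nsmul a n) ▸ rfl
        rw [h1, hhom n hn]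
        have h2 : -q a ≤ q (-a) := by simpa using hnegq (-a)
        push_cast
        nlinarith [h2, Nat.cast_nonneg (α := ℝ) n]
  -- the base graph
  have hmemS : ∀ Γ ∈ S, ∀ p ∈ Γ, (p : G × ℝ).2 ≤ q p.1 := fun Γ hΓ => hΓ
  have hΓ₀ : AddSubgroup.zmultiples ((g₀, q g₀) : G × ℝ) ∈ S := by
    rintro p hp
    rw [AddSubgroup.mem_zmultiples_iff] at hp
    obtain ⟨z, rfl⟩ := hp
    have h1 : (z • ((g₀, q g₀) : G × ℝ)).1 = z • g₀ := rfl
    have h2 : (z • ((g₀, q g₀) : G × ℝ)).2 = (z : ℝ) * q g₀ := by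
      simp [Prod.smul_def, zsmul_eq_mul]
    rw [h1, h2]
    exact hzkey g₀ z
  -- Zorn
  obtain ⟨Γ, hΓ₀Γ, hΓS, hmax⟩ : ∃ Γ, AddSubgroup.zmultiples ((g₀, q g₀) : G × ℝ) ≤ Γ ∧
      Γ ∈ S ∧ ∀ Γ' ∈ S, Γ ≤ Γ' → Γ' = Γ := by
    obtain ⟨m, hm1, hm2⟩ := zorn_le_nonempty₀ S (fun c hcS hc Γy hΓy => by
      refine ⟨sSup c, ?_, fun z hz => le_sSup hz⟩
      intro p hp
      rw [AddSubgroup.mem_sSup_of_directedOn ⟨Γy, hΓy⟩ hc.directedOn] at hp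
      obtain ⟨Γ', hΓ'c, hpΓ'⟩ := hp
      exact hcS hΓ'c p hpΓ') _ hΓ₀
    exact ⟨m, hm1, hm2.1, fun Γ' hΓ' hle => le_antisymm (hm2.2 hΓ' hle) hle⟩
  -- totality of the maximal graph
  have htot : ∀ g : G, ∃ t : ℝ, (g, t) ∈ Γ := by
    by_contra hcon
    push_neg at hcon
    obtain ⟨g₁, hg₁⟩ := hcon
    set T : Set ℝ :=
      {r | ∃ p ∈ Γ, ∃ n : ℕ, 0 < n ∧ r = (q (p.1 + n • g₁) - p.2) / n} with hT
    have hTne : T.Nonempty := by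
      refine ⟨q (0 + 1 • g₁) - (0:ℝ), (0 : G × ℝ), Γ.zero_mem, 1, one_pos, by norm_num⟩
    have hcross : ∀ p' ∈ Γ, ∀ m : ℕ, 0 < m →
        ∀ r ∈ T, (p'.2 - q ((p' : G × ℝ).1 - m • g₁)) / m ≤ r := by
      rintro p' hp' m hm r ⟨p, hp, n, hn, rfl⟩
      rw [div_le_div_iff₀ (by positivity) (by positivity)]
      have hmem : m • p + n • p' ∈ Γ := Γ.add_mem (Γ.nsmul_mem hp m) (Γ.nsmul_mem hp' n)
      have hq1 := hΓS _ hmem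
      have hfst : (m • p + n • p' : G × ℝ).1 = m • p.1 + n • p'.1 := rfl
      have hsnd : (m • p + n • p' : G × ℝ).2 = m * p.2 + n * p'.2 := by
        simp [Prod.smul_def, nsmul_eq_mul]
      rw [hfst, hsnd] at hq1
      have hsplit : m • p.1 + n • p'.1 = m • (p.1 + n • g₁) + n • (p'.1 - m • g₁) := by
        rw [smul_add, smul_sub, smul_smul, smul_smul, Nat.mul_comm]
        abel
      have hq2 : q (m • p.1 + n • p'.1) ≤ m * q (p.1 + n • g₁) + n * q (p'.1 - m • g₁) := by
        rw [hsplit]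
        calc q (m • (p.1 + n • g₁) + n • (p'.1 - m • g₁))
            ≤ q (m • (p.1 + n • g₁)) + q (n • (p'.1 - m • g₁)) := hadd _ _
          _ = m * q (p.1 + n • g₁) + n * q (p'.1 - m • g₁) := by
              rw [hhom m hm, hhom n hn]
      nlinarith [hq1, hq2]
    have hTbdd : BddBelow T :=
      ⟨((0:G×ℝ).2 - q ((0:G×ℝ).1 - 1 • g₁)) / (1:ℕ), fun r hr =>
        hcross 0 Γ.zero_mem 1 one_pos r hr⟩
    set c : ℝ := sInf T with hc
    have hc_le : ∀ p ∈ Γ, ∀ n : ℕ, 0 < n → c ≤ (q ((p : G × ℝ).1 + n • g₁) - p.2) / n :=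
      fun p hp n hn => csInf_le hTbdd ⟨p, hp, n, hn, rfl⟩
    have hle_c : ∀ p ∈ Γ, ∀ m : ℕ, 0 < m → ((p : G × ℝ).2 - q (p.1 - m • g₁)) / m ≤ c :=
      fun p hp m hm => le_csInf hTne (hcross p hp m hm)
    -- extended graph
    have hΓ' : Γ ⊔ AddSubgroup.zmultiples ((g₁, c) : G × ℝ) ∈ S := by
      intro p'' hp''
      rw [AddSubgroup.mem_sup] at hp''
      obtain ⟨p, hp, w, hw, rfl⟩ := hp''
      rw [AddSubgroup.mem_zmultiples_iff] at hw
      obtain ⟨z, rfl⟩ := hw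
      have hfst : (p + z • ((g₁, c) : G × ℝ)).1 = p.1 + z • g₁ := rfl
      have hsnd : (p + z • ((g₁, c) : G × ℝ)).2 = p.2 + (z : ℝ) * c := by
        simp [Prod.smul_def, zsmul_eq_mul]
      rw [hfst, hsnd]
      obtain ⟨n, rfl | rfl⟩ := z.eq_nat_or_neg
      · rcases Nat.eq_zero_or_pos n with rfl | hn
        · simpa using hΓS _ hp
        · have h1 := hc_le p hp n hn
          rw [le_div_iff₀ (by positivity)] at h1
          have h2 : ((n:ℤ) : ℝ) = (n : ℝ) := by push_cast; ring
          rw [natCast_zsmul, h2]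
          nlinarith [h1]
      · rcases Nat.eq_zero_or_pos n with rfl | hn
        · simpa using hΓS _ hp
        · have h1 := hle_c p hp n hn
          rw [div_le_iff₀ (by positivity)] at h1
          have hz : (-(n:ℤ)) • g₁ = -(n • g₁) := by
            rw [neg_zsmul, natCast_zsmul]
          rw [hz]
          have h2 : p.1 + -(n • g₁) = p.1 - n • g₁ := by abel
          rw [h2]
          push_cast
          nlinarith [h1]
    have hle : Γ ≤ Γ ⊔ AddSubgroup.zmultiples ((g₁, c) : G × ℝ) := le_sup_left
    have heq := hmax _ hΓ' hle
    have hmem : ((g₁, c) : G × ℝ) ∈ Γ ⊔ AddSubgroup.zmultiples ((g₁, c) : G × ℝ) :=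
      AddSubgroup.mem_sup_right (AddSubgroup.mem_zmultiples _)
    rw [heq] at hmem
    exact hg₁ c hmem
  -- extract the functional
  choose sf hsf using htot
  have huniq : ∀ g t, (g, t) ∈ Γ → t = sf g := by
    intro g t ht
    have h1 : ((g, t) - (g, sf g) : G × ℝ) ∈ Γ := Γ.sub_mem ht (hsf g)
    have h2 : ((g, sf g) - (g, t) : G × ℝ) ∈ Γ := Γ.sub_mem (hsf g) ht
    have e1 := hΓS _ h1
    have e2 := hΓS _ h2
    simp only [Prod.fst_sub, Prod.snd_sub, sub_self, q0] at e1 e2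
    linarith
  have hadditive : ∀ a b, sf (a + b) = sf a + sf b := by
    intro a b
    have : ((a, sf a) + (b, sf b) : G × ℝ) ∈ Γ := Γ.add_mem (hsf a) (hsf b)
    have h := huniq (a + b) (sf a + sf b) this
    exact h.symm
  refine ⟨AddMonoidHom.mk' sf hadditive, fun h => hΓS _ (hsf h), ?_⟩
  have hg₀ : ((g₀, q g₀) : G × ℝ) ∈ Γ :=
    hΓ₀Γ (AddSubgroup.mem_zmultiples _)
  exact (huniq g₀ (q g₀) hg₀).symm




variable (A : Type*) [AddCommMonoid A]

def grSetoid : Setoid (A × A) where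
  r p q := ∃ e, p.1 + q.2 + e = q.1 + p.2 + e
  iseqv := by
    constructor
    · exact fun p => ⟨0, rfl⟩
    · rintro p q ⟨e, h⟩; exact ⟨e, h.symm⟩
    · rintro p q r ⟨e, h1⟩ ⟨f, h2⟩
      refine ⟨q.2 + e + f, ?_⟩
      calc p.1 + r.2 + (q.2 + e + f) = (p.1 + q.2 + e) + (r.2 + f) := by abel
        _ = (q.1 + p.2 + e) + (r.2 + f) := by rw [h1]
        _ = (q.1 + r.2 + f) + (p.2 + e) := by abel
        _ = (r.1 + q.2 + f) + (p.2 + e) := by rw [h2]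
        _ = r.1 + p.2 + (q.2 + e + f) := by abel

def GG : Type _ := Quotient (grSetoid A)

variable {A}

def GG.mk (p : A × A) : GG A := Quotient.mk (grSetoid A) p

lemma GG.sound {p q : A × A} (e : A) (h : p.1 + q.2 + e = q.1 + p.2 + e) :
    GG.mk p = GG.mk q := Quotient.sound ⟨e, h⟩

lemma GG.exact {p q : A × A} (h : GG.mk p = GG.mk q) :
    ∃ e, p.1 + q.2 + e = q.1 + p.2 + e := Quotient.exact h

lemma GG.ind {motive : GG A → Prop} (h : ∀ p, motive (GG.mk p)) : ∀ g, motive g :=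
  Quotient.ind h

instance : Add (GG A) :=
  ⟨Quotient.map₂ (· + ·) (by
    rintro ⟨a1, a2⟩ ⟨b1, b2⟩ ⟨e, h1⟩ ⟨c1, c2⟩ ⟨d1, d2⟩ ⟨f, h2⟩
    refine ⟨e + f, ?_⟩
    simp only at h1 h2 ⊢
    calc a1 + c1 + (b2 + d2) + (e + f) = (a1 + b2 + e) + (c1 + d2 + f) := by abel
      _ = (b1 + a2 + e) + (d1 + c2 + f) := by rw [h1, h2]
      _ = b1 + d1 + (a2 + c2) + (e + f) := by abel)⟩

instance : Zero (GG A) := ⟨GG.mk (0, 0)⟩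

instance : Neg (GG A) :=
  ⟨Quotient.map Prod.swap (by
    rintro ⟨a1, a2⟩ ⟨b1, b2⟩ ⟨e, h⟩
    refine ⟨e, ?_⟩
    simp only [Prod.swap] at h ⊢
    calc a2 + b1 + e = b1 + a2 + e := by abel
      _ = a1 + b2 + e := h.symm
      _ = b2 + a1 + e := by abel)⟩

instance : AddCommGroup (GG A) where
  add_assoc := by
    rintro ⟨⟨a1, a2⟩⟩ ⟨⟨b1, b2⟩⟩ ⟨⟨c1, c2⟩⟩
    exact Quotient.sound ⟨0, by simp only [Prod.fst_add, Prod.snd_add]; try abel⟩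
  zero_add := by
    rintro ⟨⟨a1, a2⟩⟩
    exact Quotient.sound ⟨0, by simp only [Prod.fst_add, Prod.snd_add]; try abel⟩
  add_zero := by
    rintro ⟨⟨a1, a2⟩⟩
    exact Quotient.sound ⟨0, by simp only [Prod.fst_add, Prod.snd_add]; try abel⟩
  add_comm := by
    rintro ⟨⟨a1, a2⟩⟩ ⟨⟨b1, b2⟩⟩
    exact Quotient.sound ⟨0, by simp only [Prod.fst_add, Prod.snd_add]; try abel⟩
  neg_add_cancel := by
    rintro ⟨⟨a1, a2⟩⟩
    exact Quotient.sound ⟨0, by simp only [Prod.fst_add, Prod.snd_add, Prod.fst_swap, Prod.snd_swap, Prod.swap_prod_mk]; try abel⟩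
  nsmul := nsmulRec
  zsmul := zsmulRec

lemma GG.mk_add (p q : A × A) : GG.mk p + GG.mk q = GG.mk (p.1 + q.1, p.2 + q.2) := rfl

lemma GG.mk_neg (p : A × A) : -GG.mk p = GG.mk (p.2, p.1) := rfl

def toGG : A →+ GG A where
  toFun a := GG.mk (a, 0)
  map_zero' := rfl
  map_add' a b := (GG.sound 0 (by simp only [Prod.fst_add, Prod.snd_add]; try abel)).symm

lemma toGG_apply (a : A) : toGG a = GG.mk (a, 0) := rfl

lemma GG.mk_eq_sub (p : A × A) : GG.mk p = toGG p.1 - toGG p.2 := by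
  rw [sub_eq_add_neg, toGG_apply, toGG_apply, GG.mk_neg, GG.mk_add]
  exact GG.sound 0 (by simp)

lemma toGG_exact {a b : A} (h : toGG a = toGG b) : ∃ e, a + e = b + e := by
  obtain ⟨e, he⟩ := GG.exact h
  exact ⟨e, by simpa using he⟩

lemma GG.repr (g : GG A) : ∃ a b : A, g = toGG a - toGG b := by
  induction g using GG.ind with
  | h p => exact ⟨p.1, p.2, GG.mk_eq_sub p⟩


end Stmt15

open Stmt15

set_option maxHeartbeats 1000000 in
/-- Let `A` be an ordered commutative monoid with generating pair `(g₊, g₋)`.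
For `x, y ∈ A` the following are equivalent:
(1) for every rational `ε > 0` there are `n, k ∈ ℕ` with `n > 0`, `k ≤ ε·n` and
    `n • x + k • g₊ ≥ n • y + k • g₋`;
(2) `f x ≥ f y` for every functional `f : A → ℝ` (additive, order-preserving, `f 0 = 0`). -/
theorem stmt15 {A : Type*} [AddCommMonoid A] [PartialOrder A] [IsOrderedAddMonoid A]
    (gp gm : A) (hge : gm ≤ gp)
    (hgen : ∀ x : A, ∃ n : ℕ, x + n • gm ≤ n • gp ∧ n • gm ≤ n • gp + x)
    (x y : A) :
    (∀ e : ℚ, 0 < e → ∃ n k : ℕ, 0 < n ∧ (k : ℚ) ≤ e * n ∧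
      n • y + k • gm ≤ n • x + k • gp) ↔
    (∀ f : A → ℝ,
      (∀ a b : A, f (a + b) = f a + f b) → f 0 = 0 →
      (∀ a b : A, a ≤ b → f a ≤ f b) →
      f y ≤ f x) := by
  constructor
  · -- easy direction
    intro h1 f hfadd hf0 hfmono
    have hsmul : ∀ (n : ℕ) (a : A), f (n • a) = n * f a := by
      intro n a
      induction n with
      | zero => simpa using hf0
      | succ n ih => rw [succ_nsmul, hfadd, ih]; push_cast; ring
    have hD : 0 ≤ f gp - f gm := by have := hfmono _ _ hge; linarith
    have key : ∀ e : ℚ, 0 < e → f y - f x ≤ e * (f gp - f gm) := by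
      intro e he
      obtain ⟨n, k, hn, hk, hineq⟩ := h1 e he
      have h2 := hfmono _ _ hineq
      rw [hfadd, hfadd, hsmul, hsmul, hsmul, hsmul] at h2
      have hkR : (k : ℝ) ≤ (e : ℝ) * n := by exact_mod_cast hk
      have hnR : (0:ℝ) < n := by exact_mod_cast hn
      have h3 : (n:ℝ) * (f y - f x) ≤ (k:ℝ) * (f gp - f gm) := by nlinarith
      have h4 : (k:ℝ) * (f gp - f gm) ≤ (e:ℝ) * n * (f gp - f gm) := by nlinarith
      nlinarith
    by_contra hcon
    push_neg at hcon
    have hδpos : 0 < f y - f x := by linarith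
    rcases eq_or_lt_of_le hD with hD0 | hDpos
    · have := key 1 one_pos
      rw [← hD0] at this
      simp at this
      linarith
    · obtain ⟨e, he0, he1⟩ := exists_rat_btwn (div_pos hδpos hDpos)
      have hkey := key e (by exact_mod_cast he0)
      rw [lt_div_iff₀ hDpos] at he1
      linarith
  · -- hard direction
    intro h2
    by_contra hcon
    push_neg at hcon
    obtain ⟨ε, hε, hfail⟩ := hcon
    -- the Grothendieck group, cone, and order unit
    set g : GG A := toGG x - toGG y with hg
    set u : GG A := toGG gp - toGG gm with hu
    set C : Set (GG A) := {w | ∃ a b : A, a ≤ b ∧ w = toGG b - toGG a} with hC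
    have hnsmulz : ∀ (k : ℕ) (w : GG A), k • w = (k : ℤ) • w :=
      fun k w => (natCast_zsmul w k).symm
    have hC0 : (0 : GG A) ∈ C := ⟨0, 0, le_refl 0, by simp⟩
    have hCadd : ∀ {w v}, w ∈ C → v ∈ C → w + v ∈ C := by
      rintro w v ⟨a, b, hab, rfl⟩ ⟨c, d, hcd, rfl⟩
      exact ⟨a + c, b + d, add_le_add hab hcd, by rw [map_add, map_add]; abel⟩
    have hCnsmul : ∀ (n : ℕ) {w}, w ∈ C → n • w ∈ C := by
      intro n
      induction n with
      | zero => intro w hw; simpa using hC0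
      | succ n ih => intro w hw; rw [succ_nsmul]; exact hCadd (ih hw) hw
    have hCu : u ∈ C := ⟨gm, gp, hge, rfl⟩
    have htransl : ∀ p r : A, toGG p - toGG r ∈ C → ∃ d : A, r + d ≤ p + d := by
      rintro p r ⟨a, b, hab, heq⟩
      have h3 : toGG p + toGG a = toGG b + toGG r := sub_eq_sub_iff_add_eq_add.mp heq
      have h4 : toGG (p + a) = toGG (b + r) := by rw [map_add, map_add]; exact h3
      obtain ⟨e, he⟩ := toGG_exact h4
      refine ⟨a + e, ?_⟩
      have h5 : r + (a + e) ≤ r + (b + e) :=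
        add_le_add_right (add_le_add_left hab e) r
      have h6 : r + (b + e) = p + (a + e) := by
        calc r + (b + e) = b + r + e := by abel
          _ = p + a + e := he.symm
          _ = p + (a + e) := by abel
      rw [h6] at h5
      exact h5
    have hOU : ∀ w : GG A, ∃ N : ℕ, N • u - w ∈ C := by
      intro w
      obtain ⟨a, b, rfl⟩ := GG.repr w
      obtain ⟨n₁, h₁, _⟩ := hgen a
      obtain ⟨n₂, _, h₂⟩ := hgen b
      refine ⟨n₁ + n₂, (n₁ + n₂) • gm + a, (n₁ + n₂) • gp + b, ?_, ?_⟩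
      · calc (n₁ + n₂) • gm + a = (a + n₁ • gm) + n₂ • gm := by rw [add_nsmul]; abel
          _ ≤ n₁ • gp + n₂ • gm := add_le_add_left h₁ _
          _ ≤ n₁ • gp + (n₂ • gp + b) := add_le_add_right h₂ _
          _ = (n₁ + n₂) • gp + b := by rw [add_nsmul]; abel
      · rw [map_add, map_add, map_nsmul, map_nsmul, hu, smul_sub]
        abel
    -- group-level failure at ε/2
    have hfailC : ∀ n k : ℕ, 0 < n → (k : ℚ) ≤ ε / 2 * n → n • g + k • u ∉ C := by
      intro n k hn hk hmem
      have hEq : n • g + k • u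
          = toGG (n • x + k • gp) - toGG (n • y + k • gm) := by
        rw [map_add, map_add, map_nsmul, map_nsmul, map_nsmul, map_nsmul, hu, hg,
          smul_sub, smul_sub]
        abel
      rw [hEq] at hmem
      obtain ⟨d, hd⟩ := htransl _ _ hmem
      obtain ⟨m, hm1, hm2⟩ := hgen d
      have hiter : ∀ N : ℕ, 0 < N →
          N • (n • y + k • gm) + d ≤ N • (n • x + k • gp) + d := by
        intro N hN
        induction N with
        | zero => exact absurd hN (lt_irrefl 0)
        | succ N ih =>
          rcases Nat.eq_zero_or_pos N with rfl | hN'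
          · simpa using hd
          · have h5 := ih hN'
            calc (N + 1) • (n • y + k • gm) + d
                = (n • y + k • gm) + (N • (n • y + k • gm) + d) := by
                  rw [succ_nsmul]; abel
              _ ≤ (n • y + k • gm) + (N • (n • x + k • gp) + d) := add_le_add_right h5 _
              _ = N • (n • x + k • gp) + ((n • y + k • gm) + d) := by abel
              _ ≤ N • (n • x + k • gp) + ((n • x + k • gp) + d) := by
                  exact add_le_add_right (by simpa [add_assoc] using hd) _
              _ = (N + 1) • (n • x + k • gp) + d := by rw [succ_nsmul]; abel
      have habs : ∀ N : ℕ, 0 < N →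
          (N * n) • y + (N * k + 2 * m) • gm ≤ (N * n) • x + (N * k + 2 * m) • gp := by
        intro N hN
        have h5 := hiter N hN
        have hW : (N * n) • y + (N * k + 2 * m) • gm
            = N • (n • y + k • gm) + m • gm + m • gm := by
          rw [add_nsmul, mul_smul, mul_smul, two_mul, add_nsmul, smul_add]
          abel
        have hV : (N * n) • x + (N * k + 2 * m) • gp
            = N • (n • x + k • gp) + m • gp + m • gp := by
          rw [add_nsmul, mul_smul, mul_smul, two_mul, add_nsmul, smul_add]
          abel
        rw [hW, hV]
        calc N • (n • y + k • gm) + m • gm + m • gm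
            ≤ N • (n • y + k • gm) + m • gm + (m • gp + d) := add_le_add_right hm2 _
          _ = (N • (n • y + k • gm) + d) + (m • gm + m • gp) := by abel
          _ ≤ (N • (n • x + k • gp) + d) + (m • gm + m • gp) := add_le_add_left h5 _
          _ = N • (n • x + k • gp) + m • gp + (d + m • gm) := by abel
          _ ≤ N • (n • x + k • gp) + m • gp + m • gp := add_le_add_right hm1 _
      -- choose N large and contradict hfail
      have hn' : (0 : ℚ) < n := by exact_mod_cast hn
      have hpos : (0 : ℚ) < ε / 2 * n := by positivity
      obtain ⟨N₀, hN₀⟩ := exists_nat_ge ((2 * m : ℚ) / (ε / 2 * n))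
      have hNpos : 0 < N₀ + 1 := Nat.succ_pos _
      have hN' : (0 : ℚ) < (N₀ : ℚ) + 1 := by positivity
      have hNge : (2 * m : ℚ) / (ε / 2 * n) ≤ (N₀ : ℚ) + 1 := by linarith
      have h2m : (2 * m : ℚ) ≤ ε / 2 * (((N₀ : ℚ) + 1) * n) := by
        rw [div_le_iff₀ hpos] at hNge
        nlinarith
      have hkN : ((N₀ : ℚ) + 1) * k ≤ ((N₀ : ℚ) + 1) * (ε / 2 * n) :=
        mul_le_mul_of_nonneg_left hk hN'.le
      have hcast : (((N₀ + 1) * k + 2 * m : ℕ) : ℚ) ≤ ε * (((N₀ + 1) * n : ℕ) : ℚ) := by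
        push_cast
        nlinarith [hkN, h2m]
      exact hfail ((N₀ + 1) * n) ((N₀ + 1) * k + 2 * m) (Nat.mul_pos hNpos hn) hcast
        (habs (N₀ + 1) hNpos)
    -- integer multiples of u in the cone are nonnegative
    have hCint : ∀ z : ℤ, z • u ∈ C → 0 ≤ z := by
      intro z hz
      by_contra hneg
      push_neg at hneg
      set m : ℕ := (-z).toNat with hm
      have hm1 : 0 < m := by omega
      have hz' : z = -(m : ℤ) := by omega
      obtain ⟨N, hN⟩ := hOU (-g)
      rw [sub_neg_eq_add] at hN
      have h7 : m • (N • u + g) ∈ C := hCnsmul m hN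
      have h8 : N • (z • u) ∈ C := hCnsmul N hz
      have h9 : m • (N • u + g) + N • (z • u) = m • g := by
        rw [hnsmulz m, hnsmulz N u, hnsmulz N (z • u), hnsmulz m g, hz']
        module
      have h10 : m • g + 0 • u ∈ C := by
        rw [zero_smul, add_zero, ← h9]
        exact hCadd h7 h8
      exact hfailC m 0 hm1 (by positivity) h10
    -- the sublinear functional
    set Q : GG A → Set ℝ := fun w =>
      {r | ∃ (kk : ℤ) (nn : ℕ), 0 < nn ∧ kk • u - nn • w ∈ C ∧ r = (kk : ℝ) / nn} with hQ
    have hQne : ∀ w, (Q w).Nonempty := by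
      intro w
      obtain ⟨N, hN⟩ := hOU w
      exact ⟨(N : ℝ) / 1, (N : ℤ), 1, one_pos,
        by rw [natCast_zsmul, one_nsmul]; exact hN, by norm_num⟩
    have hQbdd : ∀ w, BddBelow (Q w) := by
      intro w
      obtain ⟨N, hN⟩ := hOU (-w)
      rw [sub_neg_eq_add] at hN
      refine ⟨-(N : ℝ), ?_⟩
      rintro r ⟨kk, nn, hnn, hmem, rfl⟩
      have h1 : (kk • u - nn • w) + nn • (N • u + w) ∈ C := hCadd hmem (hCnsmul nn hN)
      have h2 : (kk • u - nn • w) + nn • (N • u + w) = (kk + (nn : ℤ) * (N : ℤ)) • u := by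
        rw [hnsmulz nn w, hnsmulz nn (N • u + w), hnsmulz N u]
        module
      rw [h2] at h1
      have h3 := hCint _ h1
      have hnnR : (0 : ℝ) < nn := by exact_mod_cast hnn
      rw [le_div_iff₀ hnnR]
      have h4 : (0 : ℝ) ≤ (kk : ℝ) + (nn : ℝ) * N := by exact_mod_cast h3
      nlinarith
    set q : GG A → ℝ := fun w => sInf (Q w) with hq
    have hqle : ∀ w r, r ∈ Q w → q w ≤ r := fun w r hr => csInf_le (hQbdd w) hr
    have hqge : ∀ w c, (∀ r ∈ Q w, c ≤ r) → c ≤ q w := fun w c h => le_csInf (hQne w) h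
    have hqadd : ∀ a b, q (a + b) ≤ q a + q b := by
      intro a b
      have hpair : ∀ r ∈ Q a, ∀ r' ∈ Q b, q (a + b) ≤ r + r' := by
        rintro r ⟨k1, n1, h1, hm1, rfl⟩ r' ⟨k2, n2, h2, hm2, rfl⟩
        have hmem : (k1 * n2 + k2 * n1) • u - (n1 * n2) • (a + b) ∈ C := by
          have h3 := hCadd (hCnsmul n2 hm1) (hCnsmul n1 hm2)
          have h4 : n2 • (k1 • u - n1 • a) + n1 • (k2 • u - n2 • b)
              = (k1 * n2 + k2 * n1) • u - (n1 * n2) • (a + b) := by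
            rw [hnsmulz n2, hnsmulz n1 (k2 • u - n2 • b), hnsmulz n1 a,
              hnsmulz n2 b, hnsmulz (n1 * n2)]
            push_cast
            module
          rw [h4] at h3
          exact h3
        have h5 : ((k1 * n2 + k2 * n1 : ℤ) : ℝ) / ((n1 * n2 : ℕ) : ℝ) ∈ Q (a + b) :=
          ⟨_, n1 * n2, Nat.mul_pos h1 h2, hmem, rfl⟩
        have h6 := hqle _ _ h5
        have hn1R : (0 : ℝ) < n1 := by exact_mod_cast h1
        have hn2R : (0 : ℝ) < n2 := by exact_mod_cast h2
        calc q (a + b) ≤ ((k1 * n2 + k2 * n1 : ℤ) : ℝ) / ((n1 * n2 : ℕ) : ℝ) := h6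
          _ = (k1 : ℝ) / n1 + (k2 : ℝ) / n2 := by push_cast; field_simp; try ring
      have h7 : ∀ r ∈ Q a, q (a + b) - r ≤ q b := by
        intro r hr
        exact hqge _ _ (fun r' hr' => by linarith [hpair r hr r' hr'])
      have h8 : q (a + b) - q b ≤ q a := hqge _ _ (fun r hr => by linarith [h7 r hr])
      linarith
    have hqhom : ∀ n : ℕ, 0 < n → ∀ a, q (n • a) = n * q a := by
      intro n hn a
      have hnR : (0 : ℝ) < n := by exact_mod_cast hn
      apply le_antisymm
      · have h1 : ∀ r ∈ Q a, q (n • a) ≤ n * r := by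
          rintro r ⟨k1, n1, hn1, hm1, rfl⟩
          have hmem : ((n : ℤ) * k1) • u - n1 • (n • a) ∈ C := by
            have h3 := hCnsmul n hm1
            have h4 : n • (k1 • u - n1 • a) = ((n : ℤ) * k1) • u - n1 • (n • a) := by
              rw [hnsmulz n, hnsmulz n1 a, hnsmulz n1 (n • a), hnsmulz n a]
              module
            rw [h4] at h3
            exact h3
          have h5 := hqle _ _ ⟨_, n1, hn1, hmem, rfl⟩
          have hn1R : (0 : ℝ) < n1 := by exact_mod_cast hn1
          calc q (n • a) ≤ (((n : ℤ) * k1 : ℤ) : ℝ) / n1 := h5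
            _ = n * ((k1 : ℝ) / n1) := by push_cast; field_simp; try ring
        have h2 : ∀ r ∈ Q a, q (n • a) / n ≤ r := by
          intro r hr
          rw [div_le_iff₀ hnR]
          calc q (n • a) ≤ n * r := h1 r hr
            _ = r * n := by ring
        have h3 := hqge _ _ h2
        calc q (n • a) = (q (n • a) / n) * n := by field_simp
          _ ≤ q a * n := by nlinarith
          _ = n * q a := by ring
      · apply hqge
        rintro r ⟨k1, n1, hn1, hm1, rfl⟩
        have hmem : k1 • u - (n1 * n) • a ∈ C := by
          have h4 : k1 • u - n1 • (n • a) = k1 • u - (n1 * n) • a := by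
            rw [mul_smul]
          rw [h4] at hm1
          exact hm1
        have h5 := hqle _ _ ⟨k1, n1 * n, Nat.mul_pos hn1 hn, hmem, rfl⟩
        have hn1R : (0 : ℝ) < n1 := by exact_mod_cast hn1
        have hn1n : (0 : ℝ) < ((n1 * n : ℕ) : ℝ) := by positivity
        calc (n : ℝ) * q a ≤ n * ((k1 : ℝ) / ((n1 * n : ℕ) : ℝ)) :=
              mul_le_mul_of_nonneg_left h5 hnR.le
          _ = (k1 : ℝ) / n1 := by push_cast; field_simp
    -- q is nonpositive on -C
    have hqC : ∀ w ∈ C, q (-w) ≤ 0 := by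
      intro w hw
      have hmem : (0 : ℤ) • u - 1 • (-w) ∈ C := by
        rw [zero_zsmul, one_nsmul, zero_sub, neg_neg]
        exact hw
      have := hqle _ _ ⟨0, 1, one_pos, hmem, rfl⟩
      simpa using this
    -- lower bound for q at -g
    have hqlow : ((ε : ℝ) / 2) ≤ q (-g) := by
      apply hqge
      rintro r ⟨kk, nn, hnn, hmem, rfl⟩
      have hmem' : kk • u + nn • g ∈ C := by
        have : kk • u - nn • (-g) = kk • u + nn • g := by
          rw [hnsmulz nn (-g), hnsmulz nn g]
          module
        rwa [this] at hmem
      rcases lt_or_ge kk 0 with hkneg | hkpos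
      · exfalso
        set j : ℕ := (-kk).toNat with hj
        have hjk : kk = -(j : ℤ) := by omega
        have h3 : nn • g + 0 • u ∈ C := by
          have h4 := hCadd hmem' (hCnsmul j hCu)
          have h5 : (kk • u + nn • g) + j • u = nn • g + 0 • u := by
            rw [hnsmulz nn g, hnsmulz j u, hnsmulz 0 u, hjk]
            push_cast
            module
          rwa [h5] at h4
        exact hfailC nn 0 hnn (by positivity) h3
      · set j : ℕ := kk.toNat with hj
        have hjk : kk = (j : ℤ) := by omega
        rcases le_or_gt ((j : ℚ)) (ε / 2 * nn) with hjle | hjgt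
        · exfalso
          have h3 : nn • g + j • u ∈ C := by
            have h5 : kk • u + nn • g = nn • g + j • u := by
              rw [hnsmulz nn g, hnsmulz j u, hjk]
              module
            rwa [h5] at hmem'
          exact hfailC nn j hnn hjle h3
        · have hnnQ : (0 : ℚ) < nn := by exact_mod_cast hnn
          have h6 : (ε / 2) * nn < (j : ℚ) := hjgt
          have h7 : ((ε : ℝ) / 2) * nn < (j : ℝ) := by exact_mod_cast h6
          have hnnR : (0 : ℝ) < nn := by exact_mod_cast hnn
          rw [le_div_iff₀ hnnR]
          rw [hjk]
          push_cast
          linarith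
    -- apply Hahn-Banach
    obtain ⟨s, hs, hsval⟩ := hb q hqadd hqhom (-g)
    set f : A → ℝ := fun a => s (toGG a) with hf
    have hfle := h2 f (fun a b => by simp [hf, map_add]) (by simp [hf])
      (by
        intro a b hab
        have hmem : toGG b - toGG a ∈ C := ⟨a, b, hab, rfl⟩
        have h3 : s (toGG a - toGG b) ≤ q (toGG a - toGG b) := hs _
        have h4 : toGG a - toGG b = -(toGG b - toGG a) := by abel
        rw [h4] at h3
        have h5 := hqC _ hmem
        have h6 : s (-(toGG b - toGG a)) = s (toGG a) - s (toGG b) := by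
          rw [map_neg, map_sub]
          ring
        rw [h6] at h3
        simp only [hf]
        linarith)
    have hεR : (0 : ℝ) < (ε : ℝ) := by exact_mod_cast hε
    have h8 : s (-g) = s (toGG y) - s (toGG x) := by
      rw [hg]
      rw [neg_sub, map_sub]
    have h9 : s (toGG y) - s (toGG x) ≤ 0 := by
      simp only [hf] at hfle
      linarith

    have h10 : ((ε : ℝ) / 2) ≤ s (-g) := by rw [hsval]; exact hqlow
    rw [h8] at h10
    linarith
end

section
/- Rate composition: For elements x, y, z of an ordered commutative monoid, R_max(x→z) ≥ R_max(x→y) · R_max(y→z), where R_max(x→y) := sup{ m/n : m, n ∈ ℕ, nx ≥ my } with conventions m/0 = ∞ for m > 0 and 0/0 = 0. -/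
open scoped ENNReal

/-- The maximal rate `R_max(x→y) = sup { m/n : n • x ≥ m • y }` in the extended nonnegative
reals (where the conventions `m/0 = ∞` for `m > 0` and `0/0 = 0` are those of `ℝ≥0∞`). -/
noncomputable def Rmax {A : Type*} [AddCommMonoid A] [PartialOrder A] [IsOrderedAddMonoid A] (x y : A) : ℝ≥0∞ :=
  sSup {r : ℝ≥0∞ | ∃ n m : ℕ, ¬(n = 0 ∧ m = 0) ∧ m • y ≤ n • x ∧ r = (m : ℝ≥0∞) / (n : ℝ≥0∞)}

/-- Rate composition: `R_max(x→z) ≥ R_max(x→y) · R_max(y→z)`. -/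
theorem stmt16 {A : Type*} [AddCommMonoid A] [PartialOrder A] [IsOrderedAddMonoid A] (x y z : A) :
    Rmax x y * Rmax y z ≤ Rmax x z := by
  rw [Rmax, Rmax, sSup_eq_iSup', sSup_eq_iSup', ENNReal.iSup_mul]
  refine iSup_le fun ⟨r1, hr1⟩ => ?_
  rw [ENNReal.mul_iSup]
  refine iSup_le fun ⟨r2, hr2⟩ => ?_
  obtain ⟨n, m, hnm, hle1, rfl⟩ := hr1
  obtain ⟨m', k, hmk, hle2, rfl⟩ := hr2
  simp only
  rcases eq_or_ne m 0 with rfl | hm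
  · simp
  rcases eq_or_ne k 0 with rfl | hk
  · simp
  have key : (m * k) • z ≤ (n * m') • x := by
    calc (m * k) • z = m • (k • z) := mul_smul m k z
      _ ≤ m • (m' • y) := nsmul_le_nsmul_right hle2 m
      _ = (m' * m) • y := by rw [← mul_smul, mul_comm]
      _ = m' • (m • y) := mul_smul m' m y
      _ ≤ m' • (n • x) := nsmul_le_nsmul_right hle1 m'
      _ = (n * m') • x := by rw [← mul_smul, mul_comm]
  have heq : (m : ℝ≥0∞) / n * (k / m') = ((m * k : ℕ) : ℝ≥0∞) / ((n * m' : ℕ) : ℝ≥0∞) := by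
    push_cast
    rw [div_eq_mul_inv, div_eq_mul_inv, div_eq_mul_inv,
      ENNReal.mul_inv (Or.inr (ENNReal.natCast_ne_top m')) (Or.inl (ENNReal.natCast_ne_top n))]
    ring
  rw [heq]
  apply le_sSup
  exact ⟨n * m', m * k, by simp [hm, hk], key, rfl⟩
end

section
/- The rate region is an interval: in an ordered commutative monoid, if r is a real number with R_min(x→y) ≤ r ≤ R_max(x→y), then r is a rate from x to y, i.e., every neighbourhood of r contains a fraction m/n with nx ≥ my. -/
open scoped ENNReal

/-- The minimal rate `R_min(x→y) = inf { m/n : n • x ≥ m • y }` over fractions `m/n`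
(pairs of naturals, not both zero). -/
noncomputable def Rmin {A : Type*} [AddCommMonoid A] [PartialOrder A] [IsOrderedAddMonoid A] (x y : A) : ℝ≥0∞ :=
  sInf {r : ℝ≥0∞ | ∃ n m : ℕ, ¬(n = 0 ∧ m = 0) ∧ m • y ≤ n • x ∧ r = (m : ℝ≥0∞) / (n : ℝ≥0∞)}


lemma exists_nat_ratio (ρ : ℚ) (hρ : 0 < ρ) : ∃ k l : ℕ, 0 < k ∧ (l : ℚ) = ρ * k := by
  refine ⟨ρ.den, ρ.num.toNat, ρ.den_pos, ?_⟩
  have h1 : ((ρ.num.toNat : ℕ) : ℚ) = ((ρ.num : ℤ) : ℚ) := by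
    exact_mod_cast congrArg (fun z : ℤ => (z : ℚ)) (Int.toNat_of_nonneg (Rat.num_pos.2 hρ).le)
  rw [h1]
  have hden : ((ρ.den : ℕ) : ℚ) ≠ 0 := by exact_mod_cast ρ.den_pos.ne'
  exact (div_eq_iff hden).mp (Rat.num_div_den ρ)

set_option maxHeartbeats 1000000 in
lemma key_frac (n₁ m₁ n₂ m₂ : ℕ) (q₁ q₂ : ℚ) (hq12 : q₁ < q₂) (hq₁0 : 0 ≤ q₁)
    (h1 : (m₁ : ℚ) ≤ q₁ * n₁) (h2 : q₂ * n₂ ≤ (m₂ : ℚ))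
    (hn₁ : 1 ≤ n₁) (hm₂ : 1 ≤ m₂) :
    ∃ k l : ℕ, 1 ≤ k * n₁ + l * n₂ ∧
      q₁ * ((k * n₁ + l * n₂ : ℕ) : ℚ) < ((k * m₁ + l * m₂ : ℕ) : ℚ) ∧
      ((k * m₁ + l * m₂ : ℕ) : ℚ) < q₂ * ((k * n₁ + l * n₂ : ℕ) : ℚ) := by
  have hn₁' : (1 : ℚ) ≤ n₁ := by exact_mod_cast hn₁
  have hm₂' : (1 : ℚ) ≤ m₂ := by exact_mod_cast hm₂
  have ha : 0 ≤ q₁ * n₁ - m₁ := by linarith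
  have ha' : 0 < q₂ * n₁ - m₁ := by nlinarith
  have hb' : 0 ≤ (m₂ : ℚ) - q₂ * n₂ := by linarith
  have hb : 0 < (m₂ : ℚ) - q₁ * n₂ := by
    rcases Nat.eq_zero_or_pos n₂ with h | h
    · simp [h]; linarith
    · have h2' : (1:ℚ) ≤ n₂ := by exact_mod_cast h
      nlinarith
  have hcross : (q₁ * n₁ - m₁) * ((m₂:ℚ) - q₂ * n₂) < (q₂ * n₁ - m₁) * ((m₂:ℚ) - q₁ * n₂) := by
    have hpos : 0 < (n₁:ℚ) * m₂ - m₁ * n₂ := by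
      rcases Nat.eq_zero_or_pos n₂ with h | h
      · simp [h]; nlinarith
      · have h2' : (1:ℚ) ≤ n₂ := by exact_mod_cast h
        nlinarith
    nlinarith
  have hbb : 0 < ((m₂:ℚ) - q₁ * n₂) + ((m₂:ℚ) - q₂ * n₂) := by linarith
  obtain ⟨k, l, hk, hl⟩ := exists_nat_ratio
    (((q₁ * n₁ - m₁) + (q₂ * n₁ - m₁)) / (((m₂:ℚ) - q₁ * n₂) + ((m₂:ℚ) - q₂ * n₂)))
    (div_pos (by linarith) hbb)
  have hK : (0:ℚ) < k := by exact_mod_cast hk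
  have hrel : (l : ℚ) * (((m₂:ℚ) - q₁ * n₂) + ((m₂:ℚ) - q₂ * n₂))
      = ((q₁ * n₁ - m₁) + (q₂ * n₁ - m₁)) * k := by
    rw [hl]
    field_simp
  have hdelta : 0 < (q₂ * n₁ - m₁) * ((m₂:ℚ) - q₁ * n₂)
      - (q₁ * n₁ - m₁) * ((m₂:ℚ) - q₂ * n₂) := by linarith
  have key1 : 0 < (l:ℚ) * ((m₂:ℚ) - q₁ * n₂) - (k:ℚ) * (q₁ * n₁ - m₁) := by
    have hexpand : ((l:ℚ) * ((m₂:ℚ) - q₁ * n₂) - (k:ℚ) * (q₁ * n₁ - m₁))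
        * (((m₂:ℚ) - q₁ * n₂) + ((m₂:ℚ) - q₂ * n₂))
        = (k:ℚ) * ((q₂ * n₁ - m₁) * ((m₂:ℚ) - q₁ * n₂)
            - (q₁ * n₁ - m₁) * ((m₂:ℚ) - q₂ * n₂)) := by
      linear_combination ((m₂:ℚ) - q₁ * n₂) * hrel
    have hX : 0 < ((l:ℚ) * ((m₂:ℚ) - q₁ * n₂) - (k:ℚ) * (q₁ * n₁ - m₁))
        * (((m₂:ℚ) - q₁ * n₂) + ((m₂:ℚ) - q₂ * n₂)) := by
      rw [hexpand]; exact mul_pos hK hdelta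
    by_contra hc
    push_neg at hc
    exact absurd hX (not_lt.2 (mul_nonpos_iff.2 (Or.inr ⟨hc, hbb.le⟩)))
  have key2 : 0 < (k:ℚ) * (q₂ * n₁ - m₁) - (l:ℚ) * ((m₂:ℚ) - q₂ * n₂) := by
    have hexpand : ((k:ℚ) * (q₂ * n₁ - m₁) - (l:ℚ) * ((m₂:ℚ) - q₂ * n₂))
        * (((m₂:ℚ) - q₁ * n₂) + ((m₂:ℚ) - q₂ * n₂))
        = (k:ℚ) * ((q₂ * n₁ - m₁) * ((m₂:ℚ) - q₁ * n₂)
            - (q₁ * n₁ - m₁) * ((m₂:ℚ) - q₂ * n₂)) := by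
      linear_combination (-((m₂:ℚ) - q₂ * n₂)) * hrel
    have hX : 0 < ((k:ℚ) * (q₂ * n₁ - m₁) - (l:ℚ) * ((m₂:ℚ) - q₂ * n₂))
        * (((m₂:ℚ) - q₁ * n₂) + ((m₂:ℚ) - q₂ * n₂)) := by
      rw [hexpand]; exact mul_pos hK hdelta
    by_contra hc
    push_neg at hc
    exact absurd hX (not_lt.2 (mul_nonpos_iff.2 (Or.inr ⟨hc, hbb.le⟩)))
  refine ⟨k, l, ?_, ?_, ?_⟩
  · have : 1 ≤ k * n₁ := Nat.one_le_iff_ne_zero.2 (by positivity)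
    omega
  · push_cast; linarith [key1]
  · push_cast; linarith [key2]

-- helper: casting a rational bound to ℝ≥0∞
lemma toNNReal_mul_nat_lt_nat {q : ℚ} (hq : 0 ≤ q) {a b : ℕ}
    (h : (q : ℝ) * a < b) : (Real.toNNReal q : ℝ≥0∞) * a < b := by
  have hq' : (0:ℝ) ≤ (q:ℝ) := by exact_mod_cast hq
  have h1 : (Real.toNNReal q : ℝ≥0∞) * a = ENNReal.ofReal ((q:ℝ) * a) := by
    rw [ENNReal.ofReal_mul hq']
    simp [ENNReal.ofReal, ENNReal.ofReal_natCast]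
  rw [h1, show ((b:ℝ≥0∞)) = ENNReal.ofReal (b:ℝ) by rw [ENNReal.ofReal_natCast]]
  exact (ENNReal.ofReal_lt_ofReal_iff (lt_of_le_of_lt (by positivity) h)).2 h
lemma nat_lt_toNNReal_mul_nat {q : ℚ} (hq : 0 ≤ q) {a b : ℕ}
    (h : (b : ℝ) < (q : ℝ) * a) : (b : ℝ≥0∞) < (Real.toNNReal q : ℝ≥0∞) * a := by
  have hq' : (0:ℝ) ≤ (q:ℝ) := by exact_mod_cast hq
  have h1 : (Real.toNNReal q : ℝ≥0∞) * a = ENNReal.ofReal ((q:ℝ) * a) := by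
    rw [ENNReal.ofReal_mul hq']
    simp [ENNReal.ofReal, ENNReal.ofReal_natCast]
  rw [h1, show ((b:ℝ≥0∞)) = ENNReal.ofReal (b:ℝ) by rw [ENNReal.ofReal_natCast]]
  exact (ENNReal.ofReal_lt_ofReal_iff (lt_of_le_of_lt (by positivity) h)).2 h

/-- The rate region is an interval: every `r` with `R_min(x→y) ≤ r ≤ R_max(x→y)` is a rate
from `x` to `y`, i.e. every neighbourhood of `r` (in `ℝ≥0∞`) contains a fraction `m/n` with
`n • x ≥ m • y`. -/
theorem stmt18 {A : Type*} [AddCommMonoid A] [PartialOrder A] [IsOrderedAddMonoid A] (x y : A) (r : ℝ≥0∞)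
    (h1 : Rmin x y ≤ r) (h2 : r ≤ Rmax x y) :
    ∀ V ∈ nhds r, ∃ n m : ℕ, ¬(n = 0 ∧ m = 0) ∧ m • y ≤ n • x ∧
      (m : ℝ≥0∞) / (n : ℝ≥0∞) ∈ V := by
  set S : Set ℝ≥0∞ :=
    {r : ℝ≥0∞ | ∃ n m : ℕ, ¬(n = 0 ∧ m = 0) ∧ m • y ≤ n • x ∧ r = (m : ℝ≥0∞) / (n : ℝ≥0∞)}
    with hS
  have hinf : sInf S ≤ r := h1
  have hsup : r ≤ sSup S := h2
  intro V hV
  rcases eq_or_ne r 0 with rfl | hr0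
  · have h0 : sInf S = 0 := le_antisymm hinf (zero_le (a := sInf S))
    obtain ⟨v, hv0, hvV⟩ := (nhds_bot_basis.mem_iff).1 hV
    have : sInf S < v := by rw [h0]; exact hv0
    obtain ⟨s, hsS, hs⟩ := sInf_lt_iff.1 this
    obtain ⟨n, m, hnm, hle, rfl⟩ := hsS
    exact ⟨n, m, hnm, hle, hvV hs⟩
  rcases eq_or_ne r ⊤ with rfl | hrt
  · have h0 : sSup S = ⊤ := le_antisymm le_top hsup
    obtain ⟨u, hu, huV⟩ := (nhds_top_basis.mem_iff).1 hV
    have : u < sSup S := by rw [h0]; exact hu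
    obtain ⟨t, htS, ht⟩ := lt_sSup_iff.1 this
    obtain ⟨n, m, hnm, hle, rfl⟩ := htS
    exact ⟨n, m, hnm, hle, huV ht⟩
  have hr0' : 0 < r := pos_iff_ne_zero.2 hr0
  have hrt' : r < ⊤ := lt_top_iff_ne_top.2 hrt
  obtain ⟨u, v, ⟨hur, hrv⟩, hsub⟩ :=
    (mem_nhds_iff_exists_Ioo_subset' ⟨0, hr0'⟩ ⟨⊤, hrt'⟩).1 hV
  obtain ⟨s, hsS, hsv⟩ := sInf_lt_iff.1 (lt_of_le_of_lt hinf hrv)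
  obtain ⟨t, htS, hut⟩ := lt_sSup_iff.1 (lt_of_lt_of_le hur hsup)
  rcases lt_or_ge u s with hus | hsu
  · obtain ⟨n, m, hnm, hle, rfl⟩ := hsS
    exact ⟨n, m, hnm, hle, hsub ⟨hus, hsv⟩⟩
  rcases lt_or_ge t v with htv | hvt
  · obtain ⟨n, m, hnm, hle, rfl⟩ := htS
    exact ⟨n, m, hnm, hle, hsub ⟨hut, htv⟩⟩
  obtain ⟨n₁, m₁, hnm₁, hle₁, hs⟩ := hsS
  obtain ⟨n₂, m₂, hnm₂, hle₂, ht⟩ := htS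
  have hn₁ : n₁ ≠ 0 := by
    rintro rfl
    have hm₁ : (m₁ : ℝ≥0∞) ≠ 0 := by
      have : m₁ ≠ 0 := fun h => hnm₁ ⟨rfl, h⟩
      exact_mod_cast this
    rw [Nat.cast_zero, ENNReal.div_zero hm₁] at hs
    exact absurd (hs ▸ hsu) (not_le.2 (hur.trans hrt'))
  have hm₂ : m₂ ≠ 0 := by
    rintro rfl
    rw [Nat.cast_zero, ENNReal.zero_div] at ht
    exact absurd (ht ▸ hvt) (not_le.2 (hr0'.trans hrv))
  -- pick rationals u < q₁ < r < q₂ < v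
  obtain ⟨q₁, hq₁0, huq₁, hq₁r⟩ := ENNReal.lt_iff_exists_rat_btwn.1 hur
  obtain ⟨q₂, hq₂0, hrq₂, hq₂v⟩ := ENNReal.lt_iff_exists_rat_btwn.1 hrv
  have hq₂pos : (0:ℝ) < q₂ := by
    have h := hr0'.trans hrq₂
    rw [ENNReal.coe_pos] at h
    exact_mod_cast Real.toNNReal_pos.1 h
  have hq12 : q₁ < q₂ := by
    have h := hq₁r.trans hrq₂
    rw [ENNReal.coe_lt_coe] at h
    have := (Real.toNNReal_lt_toNNReal_iff hq₂pos).1 h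
    exact_mod_cast this
  -- fraction bounds over ℚ
  have hn₁e : ((n₁:ℝ≥0∞)) ≠ 0 := by exact_mod_cast hn₁
  have hbound1 : (m₁ : ℚ) ≤ q₁ * n₁ := by
    have hlt : (m₁ : ℝ≥0∞) < (Real.toNNReal q₁ : ℝ≥0∞) * n₁ :=
      (ENNReal.div_lt_iff (Or.inl hn₁e) (Or.inl (ENNReal.natCast_ne_top n₁))).1
        (hs ▸ (lt_of_le_of_lt hsu huq₁))
    -- transfer to ℝ
    have h1 : (Real.toNNReal q₁ : ℝ≥0∞) * n₁ = ENNReal.ofReal ((q₁:ℝ) * n₁) := by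
      rw [ENNReal.ofReal_mul (by exact_mod_cast hq₁0)]
      simp [ENNReal.ofReal, ENNReal.ofReal_natCast]
    rw [h1, show ((m₁:ℝ≥0∞)) = ENNReal.ofReal (m₁:ℝ) by rw [ENNReal.ofReal_natCast]] at hlt
    have := (ENNReal.ofReal_lt_ofReal_iff_of_nonneg (by positivity)).1 hlt
    have h2 : (m₁ : ℝ) ≤ (q₁:ℝ) * n₁ := this.le
    exact_mod_cast h2
  have hbound2 : q₂ * n₂ ≤ (m₂ : ℚ) := by
    rcases Nat.eq_zero_or_pos n₂ with h | h
    · simp [h]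
    · have hn₂e : ((n₂:ℝ≥0∞)) ≠ 0 := by positivity
      have hlt : (Real.toNNReal q₂ : ℝ≥0∞) * n₂ < m₂ :=
        (ENNReal.lt_div_iff_mul_lt (Or.inl hn₂e) (Or.inl (ENNReal.natCast_ne_top n₂))).1
          (ht ▸ (lt_of_lt_of_le hq₂v hvt))
      have h1 : (Real.toNNReal q₂ : ℝ≥0∞) * n₂ = ENNReal.ofReal ((q₂:ℝ) * n₂) := by
        rw [ENNReal.ofReal_mul (by exact_mod_cast hq₂0)]
        simp [ENNReal.ofReal, ENNReal.ofReal_natCast]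
      rw [h1, show ((m₂:ℝ≥0∞)) = ENNReal.ofReal (m₂:ℝ) by rw [ENNReal.ofReal_natCast]] at hlt
      have := (ENNReal.ofReal_lt_ofReal_iff_of_nonneg (by positivity)).1 hlt
      have h2 : (q₂:ℝ) * n₂ ≤ (m₂ : ℝ) := this.le
      exact_mod_cast h2
  obtain ⟨k, l, hD, hlo, hhi⟩ := key_frac n₁ m₁ n₂ m₂ q₁ q₂ hq12 hq₁0 hbound1 hbound2
    (Nat.one_le_iff_ne_zero.2 hn₁) (Nat.one_le_iff_ne_zero.2 hm₂)
  set N : ℕ := k * m₁ + l * m₂ with hN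
  set D : ℕ := k * n₁ + l * n₂ with hDdef
  have hDe : ((D:ℝ≥0∞)) ≠ 0 := by
    have : D ≠ 0 := by omega
    exact_mod_cast this
  have hNpos : 0 < N := by
    by_contra h
    push_neg at h
    interval_cases N
    · have : q₁ * ((D:ℕ):ℚ) < 0 := by exact_mod_cast hlo
      have : (0:ℚ) ≤ q₁ * ((D:ℕ):ℚ) := by positivity
      linarith [show q₁ * ((D:ℕ):ℚ) < ((0:ℕ):ℚ) by exact_mod_cast hlo]
  refine ⟨D, N, fun h => absurd h.1 (by omega), ?_, ?_⟩
  · -- N • y ≤ D • x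
    rw [hN, hDdef, add_nsmul, add_nsmul, mul_comm k m₁, mul_comm l m₂, mul_comm k n₁,
      mul_comm l n₂, mul_nsmul, mul_nsmul, mul_nsmul, mul_nsmul]
    exact add_le_add (nsmul_le_nsmul_right hle₁ k) (nsmul_le_nsmul_right hle₂ l)
  · refine hsub ⟨?_, ?_⟩
    · -- u < N / D
      refine lt_trans huq₁ ?_
      rw [ENNReal.lt_div_iff_mul_lt (Or.inl hDe) (Or.inl (ENNReal.natCast_ne_top D))]
      refine toNNReal_mul_nat_lt_nat hq₁0 ?_
      exact_mod_cast hlo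
    · -- N / D < v
      refine lt_trans ?_ hq₂v
      rw [ENNReal.div_lt_iff (Or.inl hDe) (Or.inl (ENNReal.natCast_ne_top D))]
      refine nat_lt_toNNReal_mul_nat hq₂0 ?_
      exact_mod_cast hhi
end

section
/- Let W be an Archimedean ordered ℚ-vector space with x, y ∈ W and y ≥ 0. Then r ∈ [0,∞) is a rate from x to y if and only if f(x) ≥ r·f(y) for every functional f : W → ℝ. Consequently, if also x ≥ 0, then R_max(x→y) = inf_f f(x)/f(y), the infimum ranging over all functionals f with f(y) ≠ 0. -/
open scoped ENNReal

open Set Submodule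

set_option linter.unusedSectionVars false


open Set Submodule

section HB
variable {E : Type*} [AddCommGroup E] [Module ℚ E]

theorem ratHB_step (p : E → ℝ) (hadd : ∀ a b, p (a + b) ≤ p a + p b)
    (hhom : ∀ q : ℚ, 0 < q → ∀ w, p (q • w) = (q : ℝ) * p w)
    (f : E →ₗ.[ℚ] ℝ) (hf : ∀ x : f.domain, f x ≤ p x) (hdom : f.domain ≠ ⊤) :
    ∃ g : E →ₗ.[ℚ] ℝ, f < g ∧ ∀ x : g.domain, g x ≤ p x := by
  obtain ⟨z, -, hz⟩ : ∃ z ∈ (⊤ : Submodule ℚ E), z ∉ f.domain :=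
    SetLike.exists_of_lt (lt_top_iff_ne_top.2 hdom)
  have key : ∀ a b : f.domain, f a - p ((a : E) - z) ≤ p ((b : E) + z) - f b := by
    intro a b
    have h2 : p ((a : E) + (b : E)) ≤ p ((a : E) - z) + p ((b : E) + z) := by
      have := hadd ((a : E) - z) ((b : E) + z)
      have h' : (a : E) - z + ((b : E) + z) = (a : E) + (b : E) := by abel
      rwa [h'] at this
    have h3 : f a + f b ≤ p ((a : E) + (b : E)) := by
      have := hf (a + b)
      rw [f.map_add] at this
      simpa using this
    linarith
  set c := sInf {t : ℝ | ∃ b : f.domain, t = p ((b : E) + z) - f b} with hc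
  have hne : {t : ℝ | ∃ b : f.domain, t = p ((b : E) + z) - f b}.Nonempty := ⟨_, ⟨0, rfl⟩⟩
  have hbdd : BddBelow {t : ℝ | ∃ b : f.domain, t = p ((b : E) + z) - f b} := by
    refine ⟨f 0 - p ((0 : f.domain) - z), ?_⟩
    rintro t ⟨b, rfl⟩
    exact key 0 b
  have hcle : ∀ b : f.domain, c ≤ p ((b : E) + z) - f b := fun b => csInf_le hbdd ⟨b, rfl⟩
  have hlec : ∀ a : f.domain, f a - p ((a : E) - z) ≤ c := fun a =>
    le_csInf hne (by rintro t ⟨b, rfl⟩; exact key a b)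
  refine ⟨f.supSpanSingleton z c hz, ?_, ?_⟩
  · refine lt_iff_le_not_ge.2 ⟨f.left_le_sup _ _, fun H => ?_⟩
    replace H := LinearPMap.domain_mono.monotone H
    rw [LinearPMap.domain_supSpanSingleton, sup_le_iff, span_le, singleton_subset_iff] at H
    exact hz H.2
  · rintro ⟨w, hw⟩
    rcases mem_sup.1 hw with ⟨x, hx, y', hy', rfl⟩
    rcases mem_span_singleton.1 hy' with ⟨r, rfl⟩
    rw [LinearPMap.supSpanSingleton_apply_mk _ _ _ _ _ hx]
    rcases lt_trichotomy r 0 with hr | hr | hr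
    · -- r < 0
      have hs : (0 : ℚ) < -r := by linarith
      have hs' : (0 : ℝ) < ((-r : ℚ) : ℝ) := by exact_mod_cast hs
      have h1 := hlec ((-r)⁻¹ • ⟨x, hx⟩)
      simp only [SetLike.val_smul] at h1
      have hfx : f ((-r)⁻¹ • ⟨x, hx⟩) = ((-r : ℚ) : ℝ)⁻¹ * f ⟨x, hx⟩ := by
        rw [f.map_smul, Rat.smul_def]; push_cast; ring
      rw [hfx] at h1
      have hpe : p (x + r • z) = ((-r : ℚ) : ℝ) * p ((-r)⁻¹ • x - z) := by
        rw [← hhom (-r) hs]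
        congr 1
        rw [smul_sub, smul_smul]
        rw [mul_inv_cancel₀ (ne_of_gt hs), one_smul]
        rw [neg_smul, sub_neg_eq_add]  -- (-r) • z ; goal : x + r • z = x + - ((-r)•z)?
      show _ + _ ≤ p (x + r • z)
      rw [hpe, Rat.smul_def]
      have h2 := mul_le_mul_of_nonneg_left h1 hs'.le
      rw [mul_sub, ← mul_assoc, mul_inv_cancel₀ (ne_of_gt hs'), one_mul] at h2
      push_cast at h2 ⊢
      simp only [id_eq]
      linarith
    · subst hr
      simpa using hf ⟨x, hx⟩
    · -- r > 0
      have hr' : (0 : ℝ) < (r : ℝ) := by exact_mod_cast hr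
      have h1 := hcle (r⁻¹ • ⟨x, hx⟩)
      simp only [SetLike.val_smul] at h1
      have hfx : f (r⁻¹ • ⟨x, hx⟩) = ((r : ℚ) : ℝ)⁻¹ * f ⟨x, hx⟩ := by
        rw [f.map_smul, Rat.smul_def]; push_cast; ring
      rw [hfx] at h1
      have hpe : p (x + r • z) = ((r : ℚ) : ℝ) * p (r⁻¹ • x + z) := by
        rw [← hhom r hr]
        congr 1
        rw [smul_add, smul_smul, mul_inv_cancel₀ (ne_of_gt hr), one_smul]
      show _ + _ ≤ p (x + r • z)
      rw [hpe, Rat.smul_def]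
      have h2 := mul_le_mul_of_nonneg_left h1 hr'.le
      rw [mul_sub, ← mul_assoc, mul_inv_cancel₀ (ne_of_gt hr'), one_mul] at h2
      simp only [RingHom.id_apply]
      linarith

theorem ratHB_exists_top (p : E → ℝ) (hadd : ∀ a b, p (a + b) ≤ p a + p b)
    (hhom : ∀ q : ℚ, 0 < q → ∀ w, p (q • w) = (q : ℝ) * p w)
    (f : E →ₗ.[ℚ] ℝ) (hf : ∀ x : f.domain, f x ≤ p x) :
    ∃ q ≥ f, q.domain = ⊤ ∧ ∀ x : q.domain, q x ≤ p x := by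
  set S := { g : E →ₗ.[ℚ] ℝ | ∀ x : g.domain, g x ≤ p x }
  have hSc : ∀ c ⊆ S, IsChain (· ≤ ·) c → ∀ y ∈ c, ∃ ub ∈ S, ∀ z ∈ c, z ≤ ub := by
    intro c hcs c_chain y hy
    have cne : c.Nonempty := ⟨y, hy⟩
    have hcd : DirectedOn (· ≤ ·) c := c_chain.directedOn
    refine ⟨LinearPMap.sSup c hcd, ?_, fun _ ↦ LinearPMap.le_sSup hcd⟩
    rintro ⟨x, hx⟩
    have hdir : DirectedOn (· ≤ ·) (LinearPMap.domain '' c) :=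
      directedOn_image.2 (hcd.mono LinearPMap.domain_mono.monotone)
    rcases (mem_sSup_of_directed (cne.image _) hdir).1 hx with ⟨_, ⟨g, hgc, rfl⟩, hgx⟩
    have hle : g ≤ LinearPMap.sSup c hcd := LinearPMap.le_sSup _ hgc
    convert ← hcs hgc ⟨x, hgx⟩ using 1
    exact hle.2 rfl
  obtain ⟨q, hpq, hqs, hq⟩ := zorn_le_nonempty₀ S hSc f hf
  refine ⟨q, hpq, ?_, hqs⟩
  contrapose! hq
  rcases ratHB_step p hadd hhom q hqs hq with ⟨r, hqr, hr⟩
  exact ⟨r, hr, hqr.le, fun hrq ↦ hqr.ne' <| hrq.antisymm hqr.le⟩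

theorem ratHB (p : E → ℝ) (hadd : ∀ a b, p (a + b) ≤ p a + p b)
    (hhom : ∀ q : ℚ, 0 < q → ∀ w, p (q • w) = (q : ℝ) * p w)
    (f : E →ₗ.[ℚ] ℝ) (hf : ∀ x : f.domain, f x ≤ p x) :
    ∃ g : E →ₗ[ℚ] ℝ, (∀ x : f.domain, g x = f x) ∧ ∀ w, g w ≤ p w := by
  rcases ratHB_exists_top p hadd hhom f hf with ⟨⟨g_dom, g⟩, ⟨-, hfg⟩, rfl : g_dom = ⊤, hg⟩
  exact ⟨g.comp (LinearMap.id.codRestrict ⊤ fun _ ↦ trivial), fun x => (hfg rfl).symm,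
    fun w => hg ⟨w, trivial⟩⟩

end HB

section Gauge
variable {W : Type*} [AddCommGroup W] [PartialOrder W] [IsOrderedAddMonoid W] [Module ℚ W]
variable {U : Set W}

private lemma real_le_of_eps {a b : ℝ} (h : ∀ ε : ℝ, 0 < ε → a ≤ b + ε) : a ≤ b := by
  by_contra h'
  push_neg at h'
  have := h ((a - b) / 2) (by linarith)
  linarith

namespace RatGauge

noncomputable def p (U : Set W) (w : W) : ℝ :=
  sInf {r : ℝ | ∃ q : ℚ, 0 < q ∧ r = (q : ℝ) ∧ q⁻¹ • w ∈ U}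

lemma gbdd (w : W) : BddBelow {r : ℝ | ∃ q : ℚ, 0 < q ∧ r = (q : ℝ) ∧ q⁻¹ • w ∈ U} := by
  refine ⟨0, ?_⟩
  rintro r ⟨q, hq, rfl, -⟩
  exact_mod_cast hq.le

lemma mem_of (w : W) {q : ℚ} (hq : 0 < q) (h : q⁻¹ • w ∈ U) :
    (q : ℝ) ∈ {r : ℝ | ∃ q : ℚ, 0 < q ∧ r = (q : ℝ) ∧ q⁻¹ • w ∈ U} := ⟨q, hq, rfl, h⟩

variable (hU : AbsConvexAbsorbent U)
include hU

lemma zero_mem : (0 : W) ∈ U := hU.2.1 0 le_rfl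

lemma scale_mem {u : W} (hu : u ∈ U) {t : ℚ} (ht : 0 ≤ t) (ht1 : t ≤ 1) : t • u ∈ U := by
  have := hU.1 u hu 0 (zero_mem hU) t ht ht1
  simpa using this

lemma gne (w : W) : {r : ℝ | ∃ q : ℚ, 0 < q ∧ r = (q : ℝ) ∧ q⁻¹ • w ∈ U}.Nonempty := by
  obtain ⟨m, hm, hmw⟩ := hU.2.2 w
  exact ⟨(m⁻¹ : ℚ), m⁻¹, inv_pos.2 hm, rfl, by rwa [inv_inv]⟩

lemma p_nonneg (w : W) : 0 ≤ p U w :=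
  le_csInf (gne hU w) (by rintro r ⟨q, hq, rfl, -⟩; exact_mod_cast hq.le)

lemma p_le (w : W) {q : ℚ} (hq : 0 < q) (h : q⁻¹ • w ∈ U) : p U w ≤ (q : ℝ) :=
  csInf_le (gbdd w) (mem_of w hq h)

lemma p_add (a b : W) : p U (a + b) ≤ p U a + p U b := by
  apply real_le_of_eps
  intro ε hε
  obtain ⟨ra, ⟨qa, hqa, rfl, hqaU⟩, hra⟩ := Real.lt_sInf_add_pos (gne hU a) (half_pos hε)
  obtain ⟨rb, ⟨qb, hqb, rfl, hqbU⟩, hrb⟩ := Real.lt_sInf_add_pos (gne hU b) (half_pos hε)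
  have hab : (qa + qb)⁻¹ • (a + b) ∈ U := by
    have hsum : (0:ℚ) < qa + qb := by linarith
    have hmem := hU.1 _ hqaU _ hqbU (qa / (qa + qb)) (by positivity)
      (by rw [div_le_one hsum]; linarith)
    have h1 : (qa / (qa + qb)) • qa⁻¹ • a = (qa + qb)⁻¹ • a := by
      rw [smul_smul]; congr 1; field_simp
    have h2 : (1 - qa / (qa + qb)) • qb⁻¹ • b = (qa + qb)⁻¹ • b := by
      rw [smul_smul]; congr 1; field_simp; ring
    rw [h1, h2, ← smul_add] at hmem
    exact hmem
  have : p U (a + b) ≤ ((qa + qb : ℚ) : ℝ) := p_le hU _ (by positivity) hab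
  push_cast at this
  have hPa : (qa : ℝ) < p U a + ε / 2 := hra
  have hPb : (qb : ℝ) < p U b + ε / 2 := hrb
  linarith

lemma p_smul_le {q : ℚ} (hq : 0 < q) (w : W) : p U (q • w) ≤ (q : ℝ) * p U w := by
  have hq' : (0:ℝ) < (q : ℝ) := by exact_mod_cast hq
  have key : p U (q • w) / (q : ℝ) ≤ p U w := by
    apply le_csInf (gne hU w)
    rintro r ⟨q₀, hq₀, rfl, hq₀U⟩
    have hmem : (q * q₀)⁻¹ • (q • w) = q₀⁻¹ • w := by
      rw [smul_smul]; congr 1; field_simp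
    have : p U (q • w) ≤ ((q * q₀ : ℚ) : ℝ) :=
      p_le hU _ (by positivity) (by rw [hmem]; exact hq₀U)
    push_cast at this
    rw [div_le_iff₀ hq']
    linarith
  rw [div_le_iff₀ hq'] at key
  linarith

lemma p_smul {q : ℚ} (hq : 0 < q) (w : W) : p U (q • w) = (q : ℝ) * p U w := by
  have hq' : (0:ℝ) < (q : ℝ) := by exact_mod_cast hq
  refine le_antisymm (p_smul_le hU hq w) ?_
  have h2 := p_smul_le hU (inv_pos.2 hq) (q • w)
  rw [smul_smul, inv_mul_cancel₀ (ne_of_gt hq), one_smul] at h2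
  push_cast at h2
  calc (q : ℝ) * p U w ≤ (q : ℝ) * ((q : ℝ)⁻¹ * p U (q • w)) := by
        exact mul_le_mul_of_nonneg_left h2 hq'.le
    _ = p U (q • w) := by field_simp

lemma p_le_one {u : W} (hu : u ∈ U) : p U u ≤ 1 := by
  have := p_le hU u one_pos (by simpa using hu)
  simpa using this

lemma one_le_p {z : W} (hz : z ∉ U) : 1 ≤ p U z := by
  apply le_csInf (gne hU z)
  rintro r ⟨q, hq, rfl, hqU⟩
  by_contra h
  push_neg at h
  have hq1 : q < 1 := by exact_mod_cast h
  have : q • q⁻¹ • z ∈ U := scale_mem hU hqU hq.le hq1.le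
  rw [smul_smul, mul_inv_cancel₀ (ne_of_gt hq), one_smul] at this
  exact hz this

end RatGauge
end Gauge

theorem exists_functional {W : Type*} [AddCommGroup W] [PartialOrder W] [IsOrderedAddMonoid W] [Module ℚ W]
    (hsmul : ∀ (q : ℚ) (x : W), 0 ≤ q → 0 ≤ x → 0 ≤ q • x)
    (harch : ∀ x : W, 0 ≤ x ↔ ∀ U : Set W, AbsConvexAbsorbent U → x ∈ U)
    {z : W} (hz : ¬ 0 ≤ z) :
    ∃ f : W →ₗ[ℚ] ℝ, (∀ w : W, 0 ≤ w → 0 ≤ f w) ∧ f z < 0 := by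
  obtain ⟨U, hU, hzU⟩ : ∃ U : Set W, AbsConvexAbsorbent U ∧ z ∉ U := by
    by_contra h
    push_neg at h
    exact hz ((harch z).2 fun U hU => h U hU)
  have hz0 : z ≠ 0 := fun h => hz (h ▸ le_rfl)
  set f0 : W →ₗ.[ℚ] ℝ := LinearPMap.mkSpanSingleton z (RatGauge.p U z) hz0 with hf0def
  have hf0 : ∀ x : f0.domain, f0 x ≤ RatGauge.p U (x : W) := by
    rintro ⟨w, hw⟩
    rcases mem_span_singleton.1 hw with ⟨q, rfl⟩
    have happ : f0 ⟨q • z, hw⟩ = q • RatGauge.p U z :=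
      LinearPMap.mkSpanSingleton'_apply z (RatGauge.p U z) _ q hw
    rw [happ, Rat.smul_def]
    rcases lt_trichotomy q 0 with h | h | h
    · have hq' : (q : ℝ) ≤ 0 := by exact_mod_cast h.le
      have h1 : (q : ℝ) * RatGauge.p U z ≤ 0 :=
        mul_nonpos_iff.2 (Or.inr ⟨hq', RatGauge.p_nonneg hU z⟩)
      exact h1.trans (RatGauge.p_nonneg hU _)
    · subst h
      simpa using RatGauge.p_nonneg hU ((0:ℚ) • z)
    · rw [RatGauge.p_smul hU h]
  obtain ⟨g, hg_eq, hg_le⟩ :=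
    ratHB _ (RatGauge.p_add hU) (fun q hq w => RatGauge.p_smul hU hq w) f0 hf0
  refine ⟨-g, ?_, ?_⟩
  · intro w hw
    simp only [LinearMap.neg_apply, neg_nonneg]
    by_contra hgw
    push_neg at hgw
    obtain ⟨q, hq⟩ := exists_rat_gt ((g w)⁻¹)
    have hq0 : 0 < q := by
      have h0 : (0:ℝ) < (g w)⁻¹ := inv_pos.2 hgw
      exact_mod_cast h0.trans hq
    have hmem : q • w ∈ U := hU.2.1 _ (hsmul q w hq0.le hw)
    have h1 : g (q • w) ≤ 1 := (hg_le (q • w)).trans (RatGauge.p_le_one hU hmem)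
    rw [map_smul, Rat.smul_def] at h1
    have h2 : (1:ℝ) < (q : ℝ) * g w := by
      calc (1:ℝ) = (g w)⁻¹ * g w := by field_simp
        _ < (q : ℝ) * g w := by exact mul_lt_mul_of_pos_right hq hgw
    exact absurd h1 (not_le.2 h2)
  · have hzdom : z ∈ f0.domain := mem_span_singleton_self z
    have h1 : g z = RatGauge.p U z := by
      have := hg_eq ⟨z, hzdom⟩
      rw [this]
      exact LinearPMap.mkSpanSingleton_apply ℚ ℚ (σ := RingHom.id ℚ) hz0 (RatGauge.p U z)
    have h2 : (1:ℝ) ≤ g z := h1 ▸ RatGauge.one_le_p hU hzU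
    simp only [LinearMap.neg_apply]
    exact neg_lt_zero.mpr (lt_of_lt_of_le zero_lt_one h2)

lemma ratnum_q {q : ℚ} (hq0 : 0 ≤ q) : ((q.num.toNat : ℚ)) / ((q.den : ℕ) : ℚ) = q := by
  have h := Int.toNat_of_nonneg (Rat.num_nonneg.2 hq0)
  rw [show ((q.num.toNat : ℚ)) = ((q.num : ℚ)) from by exact_mod_cast congrArg (fun z : ℤ => (z : ℚ)) h]
  exact Rat.num_div_den q

lemma ratnum_r {q : ℚ} (hq0 : 0 ≤ q) : ((q.num.toNat : ℝ)) / ((q.den : ℕ) : ℝ) = (q : ℝ) := by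
  have h := Int.toNat_of_nonneg (Rat.num_nonneg.2 hq0)
  rw [show ((q.num.toNat : ℝ)) = ((q.num : ℝ)) from by exact_mod_cast congrArg (fun z : ℤ => (z : ℝ)) h]
  exact (Rat.cast_def q).symm

/-- In an Archimedean ordered ℚ-vector space `W` with `y ≥ 0`, a real `r ≥ 0` is a rate from
`x` to `y` iff `f x ≥ r · f y` for every functional `f`.  Consequently, if moreover `x ≥ 0`,
then `R_max(x→y) = inf_f f(x)/f(y)` over the functionals `f` with `f y ≠ 0`. -/
theorem stmt19 {W : Type*} [AddCommGroup W] [PartialOrder W] [IsOrderedAddMonoid W] [Module ℚ W]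
    (hsmul : ∀ (q : ℚ) (x : W), 0 ≤ q → 0 ≤ x → 0 ≤ q • x)
    (harch : ∀ x : W, 0 ≤ x ↔ ∀ U : Set W, AbsConvexAbsorbent U → x ∈ U)
    (x y : W) (hy : 0 ≤ y) :
    (∀ r : ℝ, 0 ≤ r →
      ((∀ ε : ℝ, 0 < ε → ∃ n m : ℕ, 0 < n ∧ m • y ≤ n • x ∧ |(m : ℝ) / n - r| < ε) ↔
        (∀ f : W →ₗ[ℚ] ℝ, (∀ z : W, 0 ≤ z → 0 ≤ f z) → r * f y ≤ f x))) ∧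
    (0 ≤ x →
      Rmax x y = ⨅ (f : W →ₗ[ℚ] ℝ) (_ : ∀ z : W, 0 ≤ z → 0 ≤ f z) (_ : f y ≠ 0),
        ENNReal.ofReal (f x / f y)) := by
  have hsep : ∀ z : W, ¬ 0 ≤ z → ∃ f : W →ₗ[ℚ] ℝ, (∀ w : W, 0 ≤ w → 0 ≤ f w) ∧ f z < 0 :=
    fun z hz => exists_functional hsmul harch hz
  have hsmul_le : ∀ (q : ℚ), 0 ≤ q → ∀ a b : W, a ≤ b → q • a ≤ q • b := by
    intro q hq a b hab
    have h := hsmul q (b - a) hq (sub_nonneg.2 hab)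
    rw [smul_sub] at h
    exact sub_nonneg.1 h
  have claimA : ∀ n m : ℕ, 0 < n → (m • y ≤ n • x ↔ ((m : ℚ) / (n : ℚ)) • y ≤ x) := by
    intro n m hn
    have hn0 : ((n : ℚ)) ≠ 0 := Nat.cast_ne_zero.2 hn.ne'
    constructor
    · intro h
      rw [← Nat.cast_smul_eq_nsmul ℚ m y, ← Nat.cast_smul_eq_nsmul ℚ n x] at h
      have h2 := hsmul_le ((n : ℚ)⁻¹) (by positivity) _ _ h
      rw [smul_smul, smul_smul, inv_mul_cancel₀ hn0, one_smul, inv_mul_eq_div] at h2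
      exact h2
    · intro h
      have h2 := hsmul_le (n : ℚ) (by positivity) _ _ h
      rw [smul_smul] at h2
      have key : ((n : ℚ)) * ((m : ℚ) / (n : ℚ)) = (m : ℚ) := by field_simp
      rw [key, Nat.cast_smul_eq_nsmul, Nat.cast_smul_eq_nsmul] at h2
      exact h2
  have hmono : ∀ f : W →ₗ[ℚ] ℝ, (∀ z : W, 0 ≤ z → 0 ≤ f z) →
      ∀ a b : W, a ≤ b → f a ≤ f b := by
    intro f hf a b hab
    have h := hf (b - a) (sub_nonneg.2 hab)
    rw [map_sub] at h
    linarith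
  constructor
  · intro r hr
    constructor
    · intro hrate f hfpos
      have hfy : 0 ≤ f y := hfpos y hy
      apply real_le_of_eps
      intro ε hε
      have hfy1 : (0 : ℝ) < f y + 1 := by linarith
      set ε1 := ε / (f y + 1) with hε1
      obtain ⟨n, m, hn, hle, happ⟩ := hrate ε1 (by positivity)
      have hq : ((m : ℚ) / (n : ℚ)) • y ≤ x := (claimA n m hn).1 hle
      have h2 : ((m : ℝ) / (n : ℝ)) * f y ≤ f x := by
        have h3 := hmono f hfpos _ _ hq
        rw [map_smul, Rat.smul_def] at h3
        push_cast at h3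
        exact h3
      have h3 : r - ε1 < (m : ℝ) / (n : ℝ) := by
        have := abs_lt.1 happ; linarith
      have h4 : (r - ε1) * f y ≤ ((m : ℝ) / (n : ℝ)) * f y :=
        mul_le_mul_of_nonneg_right h3.le hfy
      have h5 : ε1 * f y ≤ ε := by
        rw [hε1, div_mul_eq_mul_div, div_le_iff₀ hfy1]
        nlinarith
      have hexp : (r - ε1) * f y = r * f y - ε1 * f y := by ring
      linarith
    · intro H ε hε
      have hx0 : 0 ≤ x := by
        by_contra hx
        obtain ⟨f, hfpos, hfx⟩ := hsep x hx
        clear hx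
        have h1 := H f hfpos
        have h0 : 0 ≤ r * f y := mul_nonneg hr (hfpos y hy)
        linarith
      rcases eq_or_lt_of_le hr with hr0 | hrpos
      · refine ⟨1, 0, one_pos, by simpa using hx0, ?_⟩
        rw [← hr0]
        simpa using hε
      · obtain ⟨q, hq1, hq2⟩ := exists_rat_btwn (max_lt (by linarith : r - ε < r) hrpos)
        have hq0 : 0 ≤ q := by
          have h := (le_max_right (r - ε) 0).trans_lt hq1
          exact_mod_cast h.le
        have hqB : q • y ≤ x := by
          by_contra hqB
          have hns : ¬ 0 ≤ x - q • y := fun h => hqB (sub_nonneg.1 h)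
          obtain ⟨f, hfpos, hfx⟩ := hsep _ hns
          clear hqB hns
          rw [map_sub, map_smul, Rat.smul_def] at hfx
          have hH := H f hfpos
          have hfy := hfpos y hy
          have hqr : (q : ℝ) < r := hq2
          nlinarith [mul_le_mul_of_nonneg_right hqr.le hfy]
        refine ⟨q.den, q.num.toNat, q.pos, ?_, ?_⟩
        · rw [claimA _ _ q.pos, ratnum_q hq0]
          exact hqB
        · rw [ratnum_r hq0, abs_lt]
          constructor
          · have h1 : r - ε ≤ max (r - ε) 0 := le_max_left _ _
            have h2 : max (r - ε) 0 < (q : ℝ) := hq1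
            linarith
          · have h3 : (q : ℝ) < r := hq2
            linarith
  · intro hx0
    apply le_antisymm
    · apply sSup_le
      rintro r ⟨n, m, hnm, hle, rfl⟩
      refine le_iInf fun f => le_iInf fun hf => le_iInf fun hfy => ?_
      have hfy' : 0 < f y := (hf y hy).lt_of_ne (Ne.symm hfy)
      rcases Nat.eq_zero_or_pos n with hn | hn
      · exfalso
        subst hn
        have hm : m ≠ 0 := by tauto
        have hmy : m • y ≤ (0 : W) := by simpa using hle
        have h2 := hf (-(m • y)) (by simpa using neg_nonneg.2 hmy)
        rw [map_neg, map_nsmul, nsmul_eq_mul] at h2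
        have hm' : (0 : ℝ) < (m : ℝ) := by exact_mod_cast Nat.pos_of_ne_zero hm
        nlinarith
      · have hkey : (m : ℝ) * f y ≤ (n : ℝ) * f x := by
          have h2 := hf (n • x - m • y) (sub_nonneg.2 hle)
          rw [map_sub, map_nsmul, map_nsmul, nsmul_eq_mul, nsmul_eq_mul] at h2
          linarith
        have hn' : (0 : ℝ) < (n : ℝ) := by exact_mod_cast hn
        have hfrac : (m : ℝ) / (n : ℝ) ≤ f x / f y := by
          rw [div_le_div_iff₀ hn' hfy']
          linarith
        calc (m : ℝ≥0∞) / (n : ℝ≥0∞) = ENNReal.ofReal ((m : ℝ) / (n : ℝ)) := by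
              rw [ENNReal.ofReal_div_of_pos hn', ENNReal.ofReal_natCast,
                ENNReal.ofReal_natCast]
          _ ≤ ENNReal.ofReal (f x / f y) := ENNReal.ofReal_le_ofReal hfrac
    · apply le_of_forall_gt_imp_ge_of_dense
      intro c hc
      obtain ⟨q, hq0, h1, h2⟩ := ENNReal.lt_iff_exists_rat_btwn.1 hc
      have hqB : ¬ ((q : ℚ) • y ≤ x) := by
        intro hqle
        have hmem : (ENNReal.ofReal (q : ℝ)) ∈
            {r : ℝ≥0∞ | ∃ n m : ℕ, ¬(n = 0 ∧ m = 0) ∧ m • y ≤ n • x ∧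
              r = (m : ℝ≥0∞) / (n : ℝ≥0∞)} := by
          refine ⟨q.den, q.num.toNat, fun h => q.den_nz h.1, ?_, ?_⟩
          · rw [claimA _ _ q.pos, ratnum_q hq0]
            exact hqle
          · have hd : (0 : ℝ) < ((q.den : ℕ) : ℝ) := by exact_mod_cast q.pos
            rw [← ratnum_r hq0, ENNReal.ofReal_div_of_pos hd, ENNReal.ofReal_natCast,
              ENNReal.ofReal_natCast]
        have hle2 : ENNReal.ofReal (q : ℝ) ≤ Rmax x y := le_sSup hmem
        exact absurd h1 (not_lt.2 hle2)
      have hns : ¬ 0 ≤ x - (q : ℚ) • y := fun h => hqB (sub_nonneg.1 h)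
      obtain ⟨f, hfpos, hfx⟩ := hsep _ hns
      clear hns hqB
      rw [map_sub, map_smul, Rat.smul_def] at hfx
      have hfx' : f x < (q : ℝ) * f y := by linarith
      have hfy0 : f y ≠ 0 := by
        intro h0
        rw [h0, mul_zero] at hfx'
        exact absurd hfx' (not_lt.2 (hfpos x hx0))
      have hfypos : 0 < f y := (hfpos y hy).lt_of_ne (Ne.symm hfy0)
      have hdivle : f x / f y ≤ (q : ℝ) := by
        rw [div_le_iff₀ hfypos]
        linarith
      calc (⨅ (f : W →ₗ[ℚ] ℝ) (_ : ∀ z : W, 0 ≤ z → 0 ≤ f z) (_ : f y ≠ 0),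
            ENNReal.ofReal (f x / f y)) ≤ ENNReal.ofReal (f x / f y) := by
            refine iInf_le_of_le f ?_
            refine iInf_le_of_le hfpos ?_
            exact iInf_le _ hfy0
        _ ≤ (Real.toNNReal (q : ℝ) : ℝ≥0∞) := ENNReal.ofReal_le_ofReal hdivle
        _ ≤ c := h2.le
end
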